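/- arXiv:2302.06713 — 5 statements merged into one kernel-verified Lean document; each statement's English description precedes it below -/
import Mathlib

section
/- Let H be a real Hilbert space, let 0 ≤ σ < β < +∞, and let {(y_i, F_i, u_i)}_{i∈I} be a finite family of triplets in H × ℝ × H. Then the following are equivalent: (i) there exists a function f : H → ℝ that is σ-strongly convex and β-smooth such that f(y_i) = F_i and u_i ∈ ∂f(y_i) for every i ∈ I; (ii) for all i, j ∈ I one has F_i ≥ F_j + ⟨u_j, y_i − y_j⟩ + (σ/2)‖y_i − y_j‖² + (1/(2(β−σ)))‖u_i − u_j − σ(y_i − y_j)‖². -/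
/-- `u` is a subgradient of `f` at `x`: `f z ≥ f x + ⟨u, z - x⟩` for all `z`. -/
def IsSubgradientAt {H : Type*} [NormedAddCommGroup H] [InnerProductSpace ℝ H]
    (f : H → ℝ) (u x : H) : Prop :=
  ∀ z : H, f x + (inner ℝ u (z - x) : ℝ) ≤ f z

/-- `f` is `σ`-strongly convex: `f - (σ/2)‖·‖²` is convex. -/
def StronglyConvex {H : Type*} [NormedAddCommGroup H] [InnerProductSpace ℝ H]
    (σ : ℝ) (f : H → ℝ) : Prop :=
  ConvexOn ℝ Set.univ (fun x => f x - σ / 2 * ‖x‖ ^ 2)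

/-- `f` is `β`-smooth: differentiable with `β`-Lipschitz gradient. -/
def IsSmoothWith {H : Type*} [NormedAddCommGroup H] [InnerProductSpace ℝ H]
    [CompleteSpace H] (β : ℝ) (f : H → ℝ) : Prop :=
  Differentiable ℝ f ∧ ∀ x y : H, ‖gradient f x - gradient f y‖ ≤ β * ‖x - y‖


section InterpolationAux

open Set InnerProductSpace Filter

set_option maxHeartbeats 1000000
set_option linter.unusedSectionVars false

variable {H : Type*} [NormedAddCommGroup H] [InnerProductSpace ℝ H] [CompleteSpace H]

lemma normsq_smul (t : ℝ) (e : H) : ‖t • e‖ ^ 2 = t ^ 2 * ‖e‖ ^ 2 := by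
  rw [norm_smul]; simp [mul_pow, sq_abs]

lemma sq_expand (c e : H) (t : ℝ) :
    ‖c - t • e‖ ^ 2 = ‖c‖ ^ 2 - 2 * t * (inner ℝ c e : ℝ) + t ^ 2 * ‖e‖ ^ 2 := by
  rw [norm_sub_sq_real, real_inner_smul_right, normsq_smul]
  ring

/-- key limiting step : if `A ≥ B - t * C` for all `t ∈ (0, 1]` and `0 ≤ C` then `A ≥ B`. -/
lemma le_of_forall_small {A B C : ℝ} (hC : 0 ≤ C)
    (h : ∀ t : ℝ, 0 < t → t ≤ 1 → B - t * C ≤ A) : B ≤ A := by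
  by_contra hcon
  push_neg at hcon
  set ε := B - A with hε
  have hε0 : 0 < ε := by linarith
  have ht := h (min 1 (ε / (2 * (C + 1)))) (by positivity) (min_le_left _ _)
  have h1 : min 1 (ε / (2 * (C + 1))) * C ≤ ε / (2 * (C + 1)) * C :=
    mul_le_mul_of_nonneg_right (min_le_right _ _) hC
  have h2 : ε / (2 * (C + 1)) * C < ε := by
    rw [div_mul_eq_mul_div, div_lt_iff₀ (by positivity)]
    nlinarith
  linarith

lemma hasGradientAt_const_mul_norm_sq (c : ℝ) (x : H) :
    HasGradientAt (fun x : H => c * ‖x‖ ^ 2) ((2 * c) • x) x := by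
  have h : HasFDerivAt (fun x : H => c * ‖x‖ ^ 2) (c • (2 • (innerSL ℝ x))) x :=
    (hasStrictFDerivAt_norm_sq x).hasFDerivAt.const_smul c
  have he : (c • (2 • (innerSL ℝ x)) : H →L[ℝ] ℝ) = toDual ℝ H ((2 * c) • x) := by
    ext v
    simp [real_inner_smul_left, toDual_apply_apply]
    ring
  rw [he] at h
  simpa using h.hasGradientAt

lemma hasGradientAt_of_sandwich {F : H → ℝ} {s x : H} {L : ℝ} (hL : 0 ≤ L)
    (hlow : ∀ w, F x + (inner ℝ s (w - x) : ℝ) ≤ F w)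
    (hup : ∀ w, F w ≤ F x + (inner ℝ s (w - x) : ℝ) + L / 2 * ‖w - x‖ ^ 2) :
    HasGradientAt F s x := by
  rw [hasGradientAt_iff_isLittleO, Asymptotics.isLittleO_iff]
  intro c hc
  have hd : (0:ℝ) < c / (L / 2 + 1) := by positivity
  rw [Metric.eventually_nhds_iff]
  refine ⟨c / (L / 2 + 1), hd, fun w hw => ?_⟩
  rw [dist_eq_norm] at hw
  have h1 : F x + (inner ℝ s (w - x) : ℝ) ≤ F w := hlow w
  have h2 : F w ≤ F x + (inner ℝ s (w - x) : ℝ) + L / 2 * ‖w - x‖ ^ 2 := hup w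
  have habs : ‖F w - F x - (inner ℝ s (w - x) : ℝ)‖ ≤ L / 2 * ‖w - x‖ ^ 2 := by
    rw [Real.norm_eq_abs, abs_le]
    constructor <;> nlinarith [sq_nonneg (‖w - x‖), norm_nonneg (w - x)]
  refine habs.trans ?_
  have h3 : ‖w - x‖ ≤ c / (L / 2 + 1) := le_of_lt hw
  have h4 : (0:ℝ) ≤ ‖w - x‖ := norm_nonneg _
  have : L / 2 * ‖w - x‖ ≤ c := by
    have : L / 2 * ‖w - x‖ ≤ L / 2 * (c / (L / 2 + 1)) := by nlinarith
    have h5 : L / 2 * (c / (L / 2 + 1)) ≤ c := by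
      rw [mul_div_assoc'] at *
      rw [div_le_iff₀ (by positivity)]
      nlinarith
    linarith
  calc L / 2 * ‖w - x‖ ^ 2 = (L / 2 * ‖w - x‖) * ‖w - x‖ := by ring
    _ ≤ c * ‖w - x‖ := by nlinarith

lemma convexOn_subgradient {g : H → ℝ} {s x : H}
    (hconv : ConvexOn ℝ Set.univ g) (hg : HasGradientAt g s x) :
    ∀ z, g x + (inner ℝ s (z - x) : ℝ) ≤ g z := by
  intro z
  set φ : ℝ → ℝ := fun t => g (x + t • (z - x)) with hφ
  have hline : ∀ t : ℝ, HasDerivAt (fun t : ℝ => x + t • (z - x)) (z - x) t := by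
    intro t
    simpa using ((hasDerivAt_id t).smul_const (z - x)).const_add x
  have hφd : HasDerivAt φ ((inner ℝ s (z - x) : ℝ)) 0 := by
    have h0 : HasFDerivAt g (toDual ℝ H s) x := hg.hasFDerivAt
    have h0' : HasFDerivAt g (toDual ℝ H s) (x + (0:ℝ) • (z - x)) := by simpa using h0
    have := h0'.comp_hasDerivAt (0:ℝ) (hline 0)
    simp only [toDual_apply_apply] at this
    exact this
  have hslope : Tendsto (fun t : ℝ => (φ t - φ 0) / t) (nhdsWithin 0 (Ioi 0))
      (nhds ((inner ℝ s (z - x) : ℝ))) := by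
    have := hφd.hasDerivWithinAt (s := Ioi (0:ℝ))
    have h2 := (hasDerivWithinAt_iff_tendsto_slope).1 this
    have hsub : nhdsWithin (0:ℝ) (Ioi 0 \ {0}) = nhdsWithin 0 (Ioi 0) := by
      rw [Set.diff_singleton_eq_self (by simp)]
    rw [hsub] at h2
    refine h2.congr fun t => ?_
    simp [slope_def_field, φ]
  have hbound : ∀ᶠ t in nhdsWithin (0:ℝ) (Ioi 0), (φ t - φ 0) / t ≤ g z - g x := by
    filter_upwards [Ioo_mem_nhdsGT_of_mem (Set.left_mem_Ico.2 one_pos)] with t ht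
    have ht0 : 0 < t := ht.1
    have ht1 : t ≤ 1 := le_of_lt ht.2
    have hc := hconv.2 (Set.mem_univ z) (Set.mem_univ x) (le_of_lt ht0) (by linarith)
      (by ring : t + (1 - t) = 1)
    have heq : t • z + (1 - t) • x = x + t • (z - x) := by
      rw [smul_sub, sub_smul, one_smul]; abel
    rw [heq] at hc
    have : φ t - φ 0 ≤ t * (g z - g x) := by
      simp only [φ, zero_smul, add_zero]
      simp only [smul_eq_mul] at hc
      nlinarith
    rw [div_le_iff₀ ht0]
    linarith [this]
  have := le_of_tendsto hslope hbound
  linarith [this]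

lemma descent_lemma {f : H → ℝ} {f' : H → H} (hgrad : ∀ x, HasGradientAt f (f' x) x)
    {β : ℝ} (hlip : ∀ a b, ‖f' a - f' b‖ ≤ β * ‖a - b‖) (x w : H) :
    f w ≤ f x + (inner ℝ (f' x) (w - x) : ℝ) + β / 2 * ‖w - x‖ ^ 2 := by
  set e := w - x with he
  have hline : ∀ t : ℝ, HasDerivAt (fun t : ℝ => x + t • e) e t := by
    intro t; simpa using ((hasDerivAt_id t).smul_const e).const_add x
  have hφd : ∀ t : ℝ, HasDerivAt (fun t : ℝ => f (x + t • e))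
      ((inner ℝ (f' (x + t • e)) e : ℝ)) t := by
    intro t
    have h0 : HasFDerivAt f (toDual ℝ H (f' (x + t • e))) (x + t • e) :=
      (hgrad (x + t • e)).hasFDerivAt
    have h1 := h0.comp_hasDerivAt t (hline t)
    simp only [toDual_apply_apply] at h1
    exact h1
  set g : ℝ → ℝ := fun t => f (x + t • e) - t * (inner ℝ (f' x) e : ℝ) - β / 2 * ‖e‖ ^ 2 * t ^ 2
    with hgdef
  have hgd : ∀ t : ℝ, HasDerivAt g
      ((inner ℝ (f' (x + t • e)) e : ℝ) - (inner ℝ (f' x) e : ℝ) - β / 2 * ‖e‖ ^ 2 * (2 * t)) t := by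
    intro t
    have h1 : HasDerivAt (fun t : ℝ => t * (inner ℝ (f' x) e : ℝ)) ((inner ℝ (f' x) e : ℝ)) t := by
      simpa using (hasDerivAt_id t).mul_const ((inner ℝ (f' x) e : ℝ))
    have h2 : HasDerivAt (fun t : ℝ => β / 2 * ‖e‖ ^ 2 * t ^ 2) (β / 2 * ‖e‖ ^ 2 * (2 * t)) t := by
      simpa using (hasDerivAt_pow 2 t).const_mul (β / 2 * ‖e‖ ^ 2)
    exact ((hφd t).sub h1).sub h2
  have hanti : AntitoneOn g (Icc 0 1) := by
    apply antitoneOn_of_deriv_nonpos (convex_Icc 0 1)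
    · exact fun t _ => ((hgd t).differentiableAt).continuousAt.continuousWithinAt
    · intro t ht
      exact (hgd t).differentiableAt.differentiableWithinAt
    · intro t ht
      rw [interior_Icc] at ht
      rw [(hgd t).deriv]
      have h1 : (inner ℝ (f' (x + t • e)) e : ℝ) - (inner ℝ (f' x) e : ℝ)
          = (inner ℝ (f' (x + t • e) - f' x) e : ℝ) := by rw [inner_sub_left]
      have h2 : ‖f' (x + t • e) - f' x‖ ≤ β * (t * ‖e‖) := by
        have := hlip (x + t • e) x
        simpa [norm_smul, abs_of_pos ht.1] using this
      have h3 : (inner ℝ (f' (x + t • e) - f' x) e : ℝ) ≤ β * (t * ‖e‖) * ‖e‖ :=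
        le_trans (real_inner_le_norm _ _) (by nlinarith [norm_nonneg e, norm_nonneg (f' (x + t • e) - f' x)])
      rw [h1]
      nlinarith [h3]
  have hkey := hanti (Set.left_mem_Icc.2 zero_le_one) (Set.right_mem_Icc.2 zero_le_one) zero_le_one
  simp only [hgdef, zero_smul, add_zero, one_smul, one_pow, zero_pow, mul_zero, mul_one,
    sub_zero, zero_mul] at hkey
  have hxe : x + e = w := by rw [he]; abel
  rw [hxe] at hkey
  linarith [hkey]

lemma cocoercive {g : H → ℝ} {g' : H → H} {L : ℝ} (hL : 0 < L)
    (hlow : ∀ a w, g a + (inner ℝ (g' a) (w - a) : ℝ) ≤ g w)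
    (hup : ∀ a w, g w ≤ g a + (inner ℝ (g' a) (w - a) : ℝ) + L / 2 * ‖w - a‖ ^ 2) :
    ∀ x y, g x + (inner ℝ (g' x) (y - x) : ℝ) + 1 / (2 * L) * ‖g' y - g' x‖ ^ 2 ≤ g y := by
  intro x y
  set d := g' y - g' x with hd
  set w := y - L⁻¹ • d with hw
  have h1 := hlow x w
  have h2 := hup y w
  have e1 : (inner ℝ (g' x) (w - x) : ℝ)
      = (inner ℝ (g' x) (y - x) : ℝ) - L⁻¹ * (inner ℝ (g' x) d : ℝ) := by
    have : w - x = (y - x) - L⁻¹ • d := by rw [hw]; abel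
    rw [this, inner_sub_right, real_inner_smul_right]
  have e2 : (inner ℝ (g' y) (w - y) : ℝ) = - (L⁻¹ * (inner ℝ (g' y) d : ℝ)) := by
    have : w - y = -(L⁻¹ • d) := by rw [hw]; abel
    rw [this, inner_neg_right, real_inner_smul_right]
  have e3 : ‖w - y‖ ^ 2 = L⁻¹ ^ 2 * ‖d‖ ^ 2 := by
    have : w - y = -(L⁻¹ • d) := by rw [hw]; abel
    rw [this, norm_neg, norm_smul]
    simp [abs_of_pos hL]
    ring
  have e4 : (inner ℝ (g' y) d : ℝ) - (inner ℝ (g' x) d : ℝ) = ‖d‖ ^ 2 := by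
    rw [← inner_sub_left, ← hd, real_inner_self_eq_norm_sq]
  rw [e1] at h1
  rw [e2, e3] at h2
  have hL' : L⁻¹ * L = 1 := inv_mul_cancel₀ (ne_of_gt hL)
  have expand : 1 / (2 * L) = L⁻¹ / 2 := by field_simp
  have e5 : L⁻¹ * (inner ℝ (g' y) d : ℝ) - L⁻¹ * (inner ℝ (g' x) d : ℝ) = L⁻¹ * ‖d‖ ^ 2 := by
    rw [← mul_sub, e4]
  have e6 : L / 2 * (L⁻¹ ^ 2 * ‖d‖ ^ 2) = L⁻¹ / 2 * ‖d‖ ^ 2 := by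
    field_simp
  rw [expand]
  rw [e6] at h2
  linarith

lemma lipschitz_of_cocoercive {g : H → ℝ} {g' : H → H} {L : ℝ} (hL : 0 < L)
    (hco : ∀ x y, g x + (inner ℝ (g' x) (y - x) : ℝ) + 1 / (2 * L) * ‖g' y - g' x‖ ^ 2 ≤ g y) :
    ∀ x y, ‖g' x - g' y‖ ≤ L * ‖x - y‖ := by
  intro x y
  have h1 := hco x y
  have h2 := hco y x
  have e1 : ‖g' x - g' y‖ = ‖g' y - g' x‖ := norm_sub_rev _ _
  set d := g' y - g' x with hd
  have hsum : 1 / L * ‖d‖ ^ 2 ≤ (inner ℝ d (y - x) : ℝ) := by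
    have e2 : (inner ℝ (g' x) (y - x) : ℝ) + (inner ℝ (g' y) (x - y) : ℝ)
        = - (inner ℝ d (y - x) : ℝ) := by
      have hxy : x - y = -(y - x) := by abel
      rw [hxy, inner_neg_right, hd, inner_sub_left]
      ring
    have e3 : ‖g' x - g' y‖ = ‖d‖ := e1
    rw [e1] at h2
    have h4 : 1 / L * ‖d‖ ^ 2 = 2 * (1 / (2 * L) * ‖d‖ ^ 2) := by
      field_simp
    linarith [h1, h2]
  have hcs : (inner ℝ d (y - x) : ℝ) ≤ ‖d‖ * ‖y - x‖ := real_inner_le_norm _ _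
  rw [e1, norm_sub_rev x y]
  rcases eq_or_lt_of_le (norm_nonneg d) with h0 | h0
  · rw [← h0]; positivity
  · have hL1 : 1 / L * ‖d‖ ^ 2 ≤ ‖d‖ * ‖y - x‖ := le_trans hsum hcs
    have hm : ‖d‖ * ‖d‖ ≤ ‖d‖ * (L * ‖y - x‖) := by
      rw [div_mul_eq_mul_div, div_le_iff₀ hL] at hL1
      nlinarith
    exact le_of_mul_le_mul_left hm h0

lemma convexOn_of_subgradients {g : H → ℝ} {g' : H → H}
    (hlow : ∀ a w, g a + (inner ℝ (g' a) (w - a) : ℝ) ≤ g w) :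
    ConvexOn ℝ Set.univ g := by
  refine ⟨convex_univ, ?_⟩
  intro a _ b _ ta tb hta htb hsum
  set x := ta • a + tb • b with hx
  have h1 := hlow x a
  have h2 := hlow x b
  have hz : ta • (a - x) + tb • (b - x) = 0 := by
    rw [smul_sub, smul_sub, hx]
    have : ta • (ta • a + tb • b) + tb • (ta • a + tb • b) = (ta + tb) • (ta • a + tb • b) :=
      (add_smul ta tb _).symm
    rw [show ta • a - ta • (ta • a + tb • b) + (tb • b - tb • (ta • a + tb • b))
        = (ta • a + tb • b) - (ta • (ta • a + tb • b) + tb • (ta • a + tb • b)) by abel,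
      this, hsum, one_smul, sub_self]
  have hinner : ta * (inner ℝ (g' x) (a - x) : ℝ) + tb * (inner ℝ (g' x) (b - x) : ℝ) = 0 := by
    rw [← real_inner_smul_right, ← real_inner_smul_right, ← inner_add_right, hz, inner_zero_right]
  have ha' : ta * (g x + (inner ℝ (g' x) (a - x) : ℝ)) ≤ ta * g a :=
    mul_le_mul_of_nonneg_left h1 hta
  have hb' : tb * (g x + (inner ℝ (g' x) (b - x) : ℝ)) ≤ tb * g b :=
    mul_le_mul_of_nonneg_left h2 htb
  have : (ta + tb) * g x ≤ ta * g a + tb * g b := by nlinarith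
  rw [hsum, one_mul] at this
  simpa [smul_eq_mul] using this

lemma prox_exists {m : H → ℝ} (hconv : ConvexOn ℝ Set.univ m) (hcont : Continuous m)
    {a : ℝ} {gv : H} (hminor : ∀ z, a + (inner ℝ gv z : ℝ) ≤ m z)
    {L : ℝ} (hL : 0 < L) (x : H) :
    ∃ p : H, ∀ z, m p + L / 2 * ‖x - p‖ ^ 2 ≤ m z + L / 2 * ‖x - z‖ ^ 2 := by
  set ψ : H → ℝ := fun z => m z + L / 2 * ‖x - z‖ ^ 2 with hψ
  have hcontψ : Continuous ψ := by
    apply hcont.add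
    exact (continuous_const.mul (((continuous_const.sub continuous_id).norm).pow 2))
  have hbdd : ∀ z, a + (inner ℝ gv x : ℝ) - ‖gv‖ ^ 2 / (2 * L) ≤ ψ z := by
    intro z
    have h1 := hminor z
    have h2 : (inner ℝ gv z : ℝ) = (inner ℝ gv x : ℝ) + (inner ℝ gv (z - x) : ℝ) := by
      rw [← inner_add_right]; congr 1; abel
    have h3 : -(‖gv‖ * ‖z - x‖) ≤ (inner ℝ gv (z - x) : ℝ) := by
      have := abs_real_inner_le_norm gv (z - x)
      rw [abs_le] at this
      linarith [this.1]
    have h4 : 0 ≤ (Real.sqrt L * ‖z - x‖ - ‖gv‖ / Real.sqrt L) ^ 2 := sq_nonneg _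
    have h5 : ‖x - z‖ = ‖z - x‖ := norm_sub_rev _ _
    have hq : ‖gv‖ ^ 2 / (2 * L) * (2 * L) = ‖gv‖ ^ 2 := by field_simp
    have key : -(‖gv‖ * ‖z - x‖) + L / 2 * ‖z - x‖ ^ 2 ≥ -(‖gv‖ ^ 2 / (2 * L)) := by
      nlinarith [sq_nonneg (L * ‖z - x‖ - ‖gv‖), hL, hq]
    rw [h2] at h1
    show a + (inner ℝ gv x : ℝ) - ‖gv‖ ^ 2 / (2 * L) ≤ m z + L / 2 * ‖x - z‖ ^ 2
    rw [h5]
    linarith [h1, h3, key]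
  have hbddBelow : BddBelow (Set.range ψ) :=
    ⟨a + (inner ℝ gv x : ℝ) - ‖gv‖ ^ 2 / (2 * L), by rintro r ⟨z, rfl⟩; exact hbdd z⟩
  set d := ⨅ z, ψ z with hd
  have hdle : ∀ z, d ≤ ψ z := fun z => ciInf_le hbddBelow z
  -- minimizing sequence
  have hseq : ∀ n : ℕ, ∃ z, ψ z < d + 1 / (n + 1) := by
    intro n
    have : d < d + 1 / (n + 1) := by
      have : (0:ℝ) < 1 / (n + 1) := by positivity
      linarith
    exact exists_lt_of_ciInf_lt this
  choose zs hzs using hseq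
  -- midpoint strong convexity bound
  have hmid : ∀ z1 z2 : H, L / 8 * ‖z1 - z2‖ ^ 2 ≤ (ψ z1 + ψ z2) / 2 - d := by
    intro z1 z2
    set mid := (2⁻¹ : ℝ) • z1 + (2⁻¹ : ℝ) • z2 with hmiddef
    have hm : m mid ≤ 2⁻¹ * m z1 + 2⁻¹ * m z2 := by
      have := hconv.2 (Set.mem_univ z1) (Set.mem_univ z2) (by norm_num : (0:ℝ) ≤ 2⁻¹)
        (by norm_num : (0:ℝ) ≤ 2⁻¹) (by norm_num)
      simpa [smul_eq_mul] using this
    have hpar : ‖x - mid‖ ^ 2 = (‖x - z1‖ ^ 2 + ‖x - z2‖ ^ 2) / 2 - ‖z1 - z2‖ ^ 2 / 4 := by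
      have hp := parallelogram_law_with_norm ℝ (x - z1) (x - z2)
      have e1 : (x - z1) + (x - z2) = (2:ℝ) • (x - mid) := by
        rw [hmiddef]
        module
      have e2 : (x - z1) - (x - z2) = z2 - z1 := by abel
      rw [e1, e2] at hp
      have e3 : ‖(2:ℝ) • (x - mid)‖ = 2 * ‖x - mid‖ := by
        rw [norm_smul]; simp
      rw [e3] at hp
      have e4 : ‖z2 - z1‖ = ‖z1 - z2‖ := norm_sub_rev _ _
      rw [e4] at hp
      nlinarith [hp]
    have hdmid := hdle mid
    rw [hψ] at hdmid ⊢
    simp only [] at hdmid ⊢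
    nlinarith [hdmid, hm, hpar]
  have hcauchy : CauchySeq zs := by
    refine cauchySeq_of_le_tendsto_0 (fun N : ℕ => Real.sqrt (8 / L * (1 / (N + 1))))
      (fun n m N hn hm => ?_) ?_
    · 
      have h1 : ψ (zs n) < d + 1 / (N + 1) := by
        refine lt_of_lt_of_le (hzs n) ?_
        have : (1:ℝ) / (n + 1) ≤ 1 / (N + 1) := by
          apply one_div_le_one_div_of_le (by positivity)
          exact_mod_cast by omega
        linarith
      have h2 : ψ (zs m) < d + 1 / (N + 1) := by
        refine lt_of_lt_of_le (hzs m) ?_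
        have : (1:ℝ) / (m + 1) ≤ 1 / (N + 1) := by
          apply one_div_le_one_div_of_le (by positivity)
          exact_mod_cast by omega
        linarith
      have h3 := hmid (zs n) (zs m)
      rw [dist_eq_norm]
      rw [Real.le_sqrt (norm_nonneg _)]
      have h4 : L / 8 * ‖zs n - zs m‖ ^ 2 ≤ 1 / (N + 1) := by linarith
      rw [div_mul_eq_mul_div, le_div_iff₀ (by positivity : (0:ℝ) < L)] at *
      · nlinarith [h4, hL]
      · positivity
    · have h0 : Tendsto (fun N : ℕ => (1:ℝ) / (N + 1)) atTop (nhds 0) :=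
        tendsto_one_div_add_atTop_nhds_zero_nat
      have h1 : Tendsto (fun N : ℕ => 8 / L * (1 / (N + 1))) atTop (nhds 0) := by
        simpa using h0.const_mul (8 / L)
      have h2 : Tendsto Real.sqrt (nhds 0) (nhds 0) := by
        simpa using Real.continuous_sqrt.tendsto 0
      exact h2.comp h1
  obtain ⟨p, hp⟩ := cauchySeq_tendsto_of_complete hcauchy
  refine ⟨p, fun z => ?_⟩
  have hψp : Tendsto (fun n => ψ (zs n)) atTop (nhds (ψ p)) := (hcontψ.tendsto p).comp hp
  have hψd : Tendsto (fun n => ψ (zs n)) atTop (nhds d) := by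
    have hup : ∀ n : ℕ, ψ (zs n) ≤ d + 1 / (n + 1) := fun n => le_of_lt (hzs n)
    have hlo : ∀ n : ℕ, d ≤ ψ (zs n) := fun n => hdle _
    have h1 : Tendsto (fun n : ℕ => d + 1 / (n + 1)) atTop (nhds d) := by
      simpa using tendsto_const_nhds.add (tendsto_one_div_add_atTop_nhds_zero_nat : Tendsto (fun n : ℕ => (1:ℝ) / (n + 1)) atTop (nhds 0))
    exact tendsto_of_tendsto_of_tendsto_of_le_of_le tendsto_const_nhds h1 hlo hup
  have : ψ p = d := tendsto_nhds_unique hψp hψd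
  calc m p + L / 2 * ‖x - p‖ ^ 2 = ψ p := rfl
    _ = d := this
    _ ≤ ψ z := hdle z

lemma construction {ι : Type*} [Fintype ι] [Nonempty ι] {L : ℝ} (hL : 0 < L)
    (Y : ι → H) (G : ι → ℝ) (v : ι → H)
    (hint : ∀ i j, G j + (inner ℝ (v j) (Y i - Y j) : ℝ) + 1 / (2 * L) * ‖v i - v j‖ ^ 2 ≤ G i) :
    ∃ (F : H → ℝ) (s : H → H),
      (∀ a w, F a + (inner ℝ (s a) (w - a) : ℝ) ≤ F w) ∧
      (∀ a w, F w ≤ F a + (inner ℝ (s a) (w - a) : ℝ) + L / 2 * ‖w - a‖ ^ 2) ∧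
      (∀ j, F (Y j) = G j) ∧
      (∀ j w, F (Y j) + (inner ℝ (v j) (w - Y j) : ℝ) ≤ F w) := by
  classical
  set ℓ : ι → H → ℝ := fun i z => G i + (inner ℝ (v i) (z - Y i) : ℝ) + ‖v i‖ ^ 2 / (2 * L)
    with hℓ
  have hne : (Finset.univ : Finset ι).Nonempty := Finset.univ_nonempty
  set m : H → ℝ := fun z => Finset.univ.sup' hne (fun i => ℓ i z) with hm
  have hle : ∀ i z, ℓ i z ≤ m z := fun i z => Finset.le_sup' (fun i => ℓ i z) (Finset.mem_univ i)
  have hsup : ∀ z r, (∀ i, ℓ i z ≤ r) → m z ≤ r := fun z r h => Finset.sup'_le _ _ fun i _ => h i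
  have hℓval : ∀ i z, ℓ i z = G i + (inner ℝ (v i) (z - Y i) : ℝ) + ‖v i‖ ^ 2 / (2 * L) :=
    fun i z => rfl
  -- m is convex
  have hmconv : ConvexOn ℝ Set.univ m := by
    refine ⟨convex_univ, fun a _ b _ ta tb hta htb hsum => ?_⟩
    refine hsup _ _ fun i => ?_
    have hY : ta • Y i + tb • Y i = Y i := by rw [← add_smul, hsum, one_smul]
    have hcomb : ta • a + tb • b - Y i = ta • (a - Y i) + tb • (b - Y i) := by
      have h2 : ta • (a - Y i) + tb • (b - Y i)
          = ta • a + tb • b - (ta • Y i + tb • Y i) := by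
        rw [smul_sub, smul_sub]; abel
      rw [h2, hY]
    have haff : ℓ i (ta • a + tb • b) = ta * ℓ i a + tb * ℓ i b := by
      rw [hℓval, hℓval, hℓval, hcomb, inner_add_right, real_inner_smul_right,
        real_inner_smul_right]
      linear_combination (G i + ‖v i‖ ^ 2 / (2 * L)) * hsum.symm
    rw [haff]
    simp only [smul_eq_mul]
    have h1 := mul_le_mul_of_nonneg_left (hle i a) hta
    have h2 := mul_le_mul_of_nonneg_left (hle i b) htb
    linarith
  -- m is continuous
  have hmcont : Continuous m := by
    set K : ℝ := Finset.univ.sup' hne (fun i => ‖v i‖) with hK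
    have hKi : ∀ i, ‖v i‖ ≤ K := by
      intro i
      rw [hK]
      exact Finset.le_sup' (fun i => ‖v i‖) (Finset.mem_univ i)
    have hK0 : 0 ≤ K := le_trans (norm_nonneg _) (hKi (Classical.arbitrary ι))
    have hlip : ∀ z w : H, m z ≤ m w + K * ‖z - w‖ := by
      intro z w
      refine hsup _ _ fun i => ?_
      have h1 : ℓ i z = ℓ i w + (inner ℝ (v i) (z - w) : ℝ) := by
        rw [hℓval, hℓval, show z - Y i = (w - Y i) + (z - w) by abel, inner_add_right]
        ring
      have h2 : (inner ℝ (v i) (z - w) : ℝ) ≤ ‖v i‖ * ‖z - w‖ := real_inner_le_norm _ _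
      have h3 : ‖v i‖ * ‖z - w‖ ≤ K * ‖z - w‖ :=
        mul_le_mul_of_nonneg_right (hKi i) (norm_nonneg _)
      linarith [hle i w]
    have : LipschitzWith (Real.toNNReal K) m := by
      rw [lipschitzWith_iff_dist_le_mul]
      intro z w
      rw [Real.dist_eq, dist_eq_norm, abs_le, Real.coe_toNNReal K hK0]
      constructor
      · have := hlip w z
        rw [norm_sub_rev] at this
        linarith
      · linarith [hlip z w]
    exact this.continuous
  -- affine minorant
  obtain ⟨i0⟩ := ‹Nonempty ι›
  have hminor : ∀ z, (G i0 - (inner ℝ (v i0) (Y i0) : ℝ) + ‖v i0‖ ^ 2 / (2 * L))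
      + (inner ℝ (v i0) z : ℝ) ≤ m z := by
    intro z
    refine le_trans (le_of_eq ?_) (hle i0 z)
    rw [hℓval, inner_sub_right]
    ring
  -- the prox map
  choose p hp using fun x => prox_exists hmconv hmcont hminor hL x
  set s : H → H := fun x => L • (x - p x) with hs
  set F : H → ℝ := fun x => m (p x) + L / 2 * ‖x - p x‖ ^ 2 with hF
  have hFval : ∀ x, F x = m (p x) + L / 2 * ‖x - p x‖ ^ 2 := fun x => rfl
  have hsval : ∀ x, s x = L • (x - p x) := fun x => rfl
  have hFle : ∀ x z, F x ≤ m z + L / 2 * ‖x - z‖ ^ 2 := fun x z => hp x z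
  -- subgradient of m at p x
  have hmsub : ∀ x z, m (p x) + (inner ℝ (s x) (z - p x) : ℝ) ≤ m z := by
    intro x z
    set c := x - p x with hc
    set e := z - p x with he
    have hse : (inner ℝ (s x) (z - p x) : ℝ) = L * (inner ℝ c e : ℝ) := by
      rw [hsval, ← he, real_inner_smul_left]
    rw [hse]
    refine le_of_forall_small (C := L / 2 * ‖e‖ ^ 2) (by positivity) fun t ht0 ht1 => ?_
    have hconv2 := hmconv.2 (Set.mem_univ (p x)) (Set.mem_univ z) (by linarith : (0:ℝ) ≤ 1 - t)
      (le_of_lt ht0) (by ring)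
    have hpt : (1 - t) • p x + t • z = p x + t • e := by
      rw [he, smul_sub, sub_smul, one_smul]
      abel
    rw [hpt] at hconv2
    have hmin := hp x (p x + t • e)
    have hnorm : ‖x - (p x + t • e)‖ ^ 2
        = ‖c‖ ^ 2 - 2 * t * (inner ℝ c e : ℝ) + t ^ 2 * ‖e‖ ^ 2 := by
      rw [show x - (p x + t • e) = c - t • e by rw [hc]; abel, sq_expand]
    rw [hnorm] at hmin
    simp only [smul_eq_mul] at hconv2
    nlinarith [hmin, hconv2, ht0]
  -- lower bound (subgradient property of F)
  have hlow : ∀ a w, F a + (inner ℝ (s a) (w - a) : ℝ) ≤ F w := by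
    intro a w
    have h1 : ∀ z : H, m (p a) + (inner ℝ (s a) (w - p a) : ℝ) - ‖s a‖ ^ 2 / (2 * L)
        ≤ m z + L / 2 * ‖w - z‖ ^ 2 := by
      intro z
      have h2 := hmsub a z
      have h3 : (0:ℝ) ≤ L / 2 * ‖w - z - L⁻¹ • s a‖ ^ 2 := by positivity
      have h4 : ‖w - z - L⁻¹ • s a‖ ^ 2
          = ‖w - z‖ ^ 2 - 2 * L⁻¹ * (inner ℝ (w - z) (s a) : ℝ) + L⁻¹ ^ 2 * ‖s a‖ ^ 2 :=
        sq_expand (w - z) (s a) L⁻¹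
      have h5 : (inner ℝ (s a) (z - p a) : ℝ)
          = (inner ℝ (s a) (w - p a) : ℝ) - (inner ℝ (w - z) (s a) : ℝ) := by
        rw [show z - p a = (w - p a) - (w - z) by abel, inner_sub_right,
          real_inner_comm (s a) (w - z)]
      rw [h4] at h3
      rw [h5] at h2
      have hinv : L * L⁻¹ = 1 := mul_inv_cancel₀ (ne_of_gt hL)
      have hinv2 : L / 2 * (L⁻¹ ^ 2 * ‖s a‖ ^ 2) = ‖s a‖ ^ 2 / (2 * L) := by
        field_simp
      have expand : L / 2 * (‖w - z‖ ^ 2 - 2 * L⁻¹ * (inner ℝ (w - z) (s a) : ℝ)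
          + L⁻¹ ^ 2 * ‖s a‖ ^ 2)
          = L / 2 * ‖w - z‖ ^ 2 - (L * L⁻¹) * (inner ℝ (w - z) (s a) : ℝ)
            + L / 2 * (L⁻¹ ^ 2 * ‖s a‖ ^ 2) := by ring
      rw [expand, hinv, hinv2] at h3
      linarith
    have h6 := h1 (p w)
    have h7 : m (p a) + (inner ℝ (s a) (w - p a) : ℝ) - ‖s a‖ ^ 2 / (2 * L)
        = F a + (inner ℝ (s a) (w - a) : ℝ) := by
      rw [hFval, hsval]
      have e1 : (inner ℝ (L • (a - p a)) (w - p a) : ℝ)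
          = (inner ℝ (L • (a - p a)) (w - a) : ℝ) + L * ‖a - p a‖ ^ 2 := by
        rw [show w - p a = (w - a) + (a - p a) by abel, inner_add_right,
          real_inner_smul_left, real_inner_smul_left, real_inner_self_eq_norm_sq]
      have e2 : ‖L • (a - p a)‖ ^ 2 = L ^ 2 * ‖a - p a‖ ^ 2 := normsq_smul L (a - p a)
      rw [e1, e2]
      field_simp
      ring
    rw [h7] at h6
    exact h6
  -- upper bound
  have hup : ∀ a w, F w ≤ F a + (inner ℝ (s a) (w - a) : ℝ) + L / 2 * ‖w - a‖ ^ 2 := by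
    intro a w
    have h1 := hFle w (p a)
    have h2 : ‖w - p a‖ ^ 2 = ‖w - a‖ ^ 2 + 2 * (inner ℝ (w - a) (a - p a) : ℝ)
        + ‖a - p a‖ ^ 2 := by
      rw [show w - p a = (w - a) + (a - p a) by abel]
      rw [@norm_add_sq_real]
    have h3 : (inner ℝ (s a) (w - a) : ℝ) = L * (inner ℝ (w - a) (a - p a) : ℝ) := by
      rw [hsval, real_inner_smul_left, real_inner_comm]
    rw [h2] at h1
    rw [h3, hFval a]
    have h8 : F w ≤ m (p a) + L / 2 * (‖w - a‖ ^ 2 + 2 * (inner ℝ (w - a) (a - p a) : ℝ)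
        + ‖a - p a‖ ^ 2) := h1
    linarith
  -- values at the data points
  have hval : ∀ j, F (Y j) = G j := by
    intro j
    have hub : F (Y j) ≤ G j := by
      have h1 := hFle (Y j) (Y j - L⁻¹ • v j)
      have h2 : m (Y j - L⁻¹ • v j) = ℓ j (Y j - L⁻¹ • v j) := by
        apply le_antisymm
        · refine hsup _ _ fun i => ?_
          rw [hℓval, hℓval]
          have e1 : (inner ℝ (v i) (Y j - L⁻¹ • v j - Y i) : ℝ)
              = (inner ℝ (v i) (Y j - Y i) : ℝ) - L⁻¹ * (inner ℝ (v i) (v j) : ℝ) := by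
            rw [show Y j - L⁻¹ • v j - Y i = (Y j - Y i) - L⁻¹ • v j by abel,
              inner_sub_right, real_inner_smul_right]
          have e2 : (inner ℝ (v j) (Y j - L⁻¹ • v j - Y j) : ℝ) = - (L⁻¹ * ‖v j‖ ^ 2) := by
            rw [show Y j - L⁻¹ • v j - Y j = -(L⁻¹ • v j) by abel, inner_neg_right,
              real_inner_smul_right, real_inner_self_eq_norm_sq]
          have e3 : ‖v j - v i‖ ^ 2 = ‖v j‖ ^ 2 - 2 * (inner ℝ (v j) (v i) : ℝ) + ‖v i‖ ^ 2 :=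
            norm_sub_sq_real _ _
          have h4 := hint j i
          have hd : 1 / (2 * L) * ‖v j - v i‖ ^ 2 = ‖v j‖ ^ 2 / (2 * L)
              - (inner ℝ (v j) (v i) : ℝ) / L + ‖v i‖ ^ 2 / (2 * L) := by
            rw [e3]
            field_simp
          rw [hd] at h4
          have hcomm : (inner ℝ (v i) (v j) : ℝ) = (inner ℝ (v j) (v i) : ℝ) := real_inner_comm _ _
          have e5 : L⁻¹ * ‖v j‖ ^ 2 = 2 * (‖v j‖ ^ 2 / (2 * L)) := by
            field_simp
          have e6 : L⁻¹ * (inner ℝ (v j) (v i) : ℝ) = (inner ℝ (v j) (v i) : ℝ) / L := by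
            field_simp
          rw [e1, e2, hcomm]
          linarith
        · exact hle j _
      rw [h2] at h1
      have h7 : ℓ j (Y j - L⁻¹ • v j) = G j - ‖v j‖ ^ 2 / (2 * L) := by
        rw [hℓval]
        rw [show Y j - L⁻¹ • v j - Y j = -(L⁻¹ • v j) by abel, inner_neg_right,
          real_inner_smul_right, real_inner_self_eq_norm_sq]
        field_simp
        ring
      have h8 : ‖Y j - (Y j - L⁻¹ • v j)‖ ^ 2 = L⁻¹ ^ 2 * ‖v j‖ ^ 2 := by
        rw [show Y j - (Y j - L⁻¹ • v j) = L⁻¹ • v j by abel, normsq_smul]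
      rw [h7, h8] at h1
      have h9 : L / 2 * (L⁻¹ ^ 2 * ‖v j‖ ^ 2) = ‖v j‖ ^ 2 / (2 * L) := by
        field_simp
      rw [h9] at h1
      calc F (Y j) ≤ G j - ‖v j‖ ^ 2 / (2 * L) + ‖v j‖ ^ 2 / (2 * L) := h1
        _ = G j := by ring
    have hlb : G j ≤ F (Y j) := by
      have h1 : G j ≤ ℓ j (p (Y j)) + L / 2 * ‖Y j - p (Y j)‖ ^ 2 := by
        rw [hℓval]
        set c := Y j - p (Y j) with hc
        have e1 : (inner ℝ (v j) (p (Y j) - Y j) : ℝ) = - (inner ℝ (v j) c : ℝ) := by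
          rw [show p (Y j) - Y j = -c by rw [hc]; abel, inner_neg_right]
        have e2 : (0:ℝ) ≤ L / 2 * ‖c - L⁻¹ • v j‖ ^ 2 := by positivity
        have e3 : ‖c - L⁻¹ • v j‖ ^ 2
            = ‖c‖ ^ 2 - 2 * L⁻¹ * (inner ℝ c (v j) : ℝ) + L⁻¹ ^ 2 * ‖v j‖ ^ 2 :=
          sq_expand c (v j) L⁻¹
        rw [e3] at e2
        have hcomm : (inner ℝ c (v j) : ℝ) = (inner ℝ (v j) c : ℝ) := real_inner_comm _ _
        have hinv : L * L⁻¹ = 1 := mul_inv_cancel₀ (ne_of_gt hL)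
        have h9 : L / 2 * (L⁻¹ ^ 2 * ‖v j‖ ^ 2) = ‖v j‖ ^ 2 / (2 * L) := by
          field_simp
        have expand : L / 2 * (‖c‖ ^ 2 - 2 * L⁻¹ * (inner ℝ c (v j) : ℝ) + L⁻¹ ^ 2 * ‖v j‖ ^ 2)
            = L / 2 * ‖c‖ ^ 2 - (L * L⁻¹) * (inner ℝ c (v j) : ℝ)
              + L / 2 * (L⁻¹ ^ 2 * ‖v j‖ ^ 2) := by ring
        rw [expand, hinv, h9] at e2
        rw [e1]
        linarith
      calc G j ≤ ℓ j (p (Y j)) + L / 2 * ‖Y j - p (Y j)‖ ^ 2 := h1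
        _ ≤ m (p (Y j)) + L / 2 * ‖Y j - p (Y j)‖ ^ 2 :=
          add_le_add_left (hle j (p (Y j))) _
        _ = F (Y j) := (hFval (Y j)).symm
    linarith
  -- subgradient at the data points
  have hsubg : ∀ j w, F (Y j) + (inner ℝ (v j) (w - Y j) : ℝ) ≤ F w := by
    intro j w
    rw [hval j]
    have h1 : G j + (inner ℝ (v j) (w - Y j) : ℝ) ≤ ℓ j (p w) + L / 2 * ‖w - p w‖ ^ 2 := by
      rw [hℓval]
      set c := w - p w with hc
      have e1 : (inner ℝ (v j) (p w - Y j) : ℝ)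
          = (inner ℝ (v j) (w - Y j) : ℝ) - (inner ℝ (v j) c : ℝ) := by
        rw [show p w - Y j = (w - Y j) - c by rw [hc]; abel, inner_sub_right]
      have e2 : (0:ℝ) ≤ L / 2 * ‖c - L⁻¹ • v j‖ ^ 2 := by positivity
      have e3 : ‖c - L⁻¹ • v j‖ ^ 2
          = ‖c‖ ^ 2 - 2 * L⁻¹ * (inner ℝ c (v j) : ℝ) + L⁻¹ ^ 2 * ‖v j‖ ^ 2 :=
        sq_expand c (v j) L⁻¹
      rw [e3] at e2
      have hcomm : (inner ℝ c (v j) : ℝ) = (inner ℝ (v j) c : ℝ) := real_inner_comm _ _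
      have hinv : L * L⁻¹ = 1 := mul_inv_cancel₀ (ne_of_gt hL)
      have h9 : L / 2 * (L⁻¹ ^ 2 * ‖v j‖ ^ 2) = ‖v j‖ ^ 2 / (2 * L) := by
        field_simp
      have expand : L / 2 * (‖c‖ ^ 2 - 2 * L⁻¹ * (inner ℝ c (v j) : ℝ) + L⁻¹ ^ 2 * ‖v j‖ ^ 2)
          = L / 2 * ‖c‖ ^ 2 - (L * L⁻¹) * (inner ℝ c (v j) : ℝ)
            + L / 2 * (L⁻¹ ^ 2 * ‖v j‖ ^ 2) := by ring
      rw [expand, hinv, h9] at e2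
      rw [e1]
      linarith
    calc G j + (inner ℝ (v j) (w - Y j) : ℝ) ≤ ℓ j (p w) + L / 2 * ‖w - p w‖ ^ 2 := h1
      _ ≤ m (p w) + L / 2 * ‖w - p w‖ ^ 2 := add_le_add_left (hle j (p w)) _
      _ = F w := (hFval w).symm
  exact ⟨F, s, hlow, hup, hval, hsubg⟩

lemma subgradient_eq {f : H → ℝ} {s u x : H} (hf : HasGradientAt f s x)
    (hu : ∀ z, f x + (inner ℝ u (z - x) : ℝ) ≤ f z) : u = s := by
  have key : ∀ v : H, (inner ℝ u v : ℝ) = (inner ℝ s v : ℝ) := by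
    intro v
    set ψ : ℝ → ℝ := fun t => f (x + t • v) - t * (inner ℝ u v : ℝ) with hψ
    have hline : ∀ t : ℝ, HasDerivAt (fun t : ℝ => x + t • v) v t := by
      intro t; simpa using ((hasDerivAt_id t).smul_const v).const_add x
    have hd : HasDerivAt ψ ((inner ℝ s v : ℝ) - (inner ℝ u v : ℝ)) 0 := by
      have h0 : HasFDerivAt f (toDual ℝ H s) (x + (0:ℝ) • v) := by simpa using hf.hasFDerivAt
      have h1 : HasDerivAt (fun t : ℝ => f (x + t • v)) ((inner ℝ s v : ℝ)) 0 := by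
        have h1' := h0.comp_hasDerivAt (0:ℝ) (hline 0)
        simp only [toDual_apply_apply] at h1'
        exact h1'
      have h2 : HasDerivAt (fun t : ℝ => t * (inner ℝ u v : ℝ)) ((inner ℝ u v : ℝ)) 0 := by
        simpa using (hasDerivAt_id (0:ℝ)).mul_const ((inner ℝ u v : ℝ))
      exact h1.sub h2
    have hmin : IsLocalMin ψ 0 := by
      apply Filter.Eventually.of_forall
      intro t
      have := hu (x + t • v)
      have he : x + t • v - x = t • v := by abel
      rw [he, real_inner_smul_right] at this
      simp only [hψ, zero_smul, add_zero, zero_mul, sub_zero]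
      linarith
    have := hmin.hasDerivAt_eq_zero hd
    linarith
  have h3 : (inner ℝ (u - s) (u - s) : ℝ) = 0 := by
    rw [inner_sub_left]
    rw [key (u - s)]
    ring
  have := inner_self_eq_zero.1 h3
  exact sub_eq_zero.1 this

lemma quad_id (σ : ℝ) (a w : H) :
    σ / 2 * ‖w‖ ^ 2 = σ / 2 * ‖a‖ ^ 2 + (inner ℝ (σ • a) (w - a) : ℝ) + σ / 2 * ‖w - a‖ ^ 2 := by
  rw [real_inner_smul_left, inner_sub_right, norm_sub_sq_real, real_inner_comm w a,
    real_inner_self_eq_norm_sq]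
  ring

lemma HasGradientAt.add' {f g : H → ℝ} {a b x : H}
    (hf : HasGradientAt f a x) (hg : HasGradientAt g b x) :
    HasGradientAt (fun z => f z + g z) (a + b) x := by
  have := hf.hasFDerivAt.add hg.hasFDerivAt
  rw [← map_add] at this
  exact (by simpa using this.hasGradientAt : HasGradientAt (f + g) (a + b) x)

lemma HasGradientAt.sub' {f g : H → ℝ} {a b x : H}
    (hf : HasGradientAt f a x) (hg : HasGradientAt g b x) :
    HasGradientAt (fun z => f z - g z) (a - b) x := by
  have := hf.hasFDerivAt.sub hg.hasFDerivAt
  rw [← map_sub] at this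
  exact (by simpa using this.hasGradientAt : HasGradientAt (f - g) (a - b) x)


end InterpolationAux

open Set InnerProductSpace Filter in
set_option maxHeartbeats 1000000 in
/-- Interpolation theorem for the class of `σ`-strongly convex and `β`-smooth
functions on a real Hilbert space (`0 ≤ σ < β < +∞`). -/
theorem interpolation_smooth_strongly_convex
    {H : Type*} [NormedAddCommGroup H] [InnerProductSpace ℝ H] [CompleteSpace H]
    {ι : Type*} [Fintype ι]
    (σ β : ℝ) (hσ : 0 ≤ σ) (hσβ : σ < β)
    (y : ι → H) (F : ι → ℝ) (u : ι → H) :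
    (∃ f : H → ℝ, StronglyConvex σ f ∧ IsSmoothWith β f ∧
        ∀ i, f (y i) = F i ∧ IsSubgradientAt f (u i) (y i)) ↔
      ∀ i j, F j + (inner ℝ (u j) (y i - y j) : ℝ) + σ / 2 * ‖y i - y j‖ ^ 2 +
        1 / (2 * (β - σ)) * ‖u i - u j - σ • (y i - y j)‖ ^ 2 ≤ F i := by
  set L : ℝ := β - σ with hLdef
  have hL : 0 < L := by simp [hLdef]; linarith
  constructor
  · rintro ⟨f, hsc, ⟨hdiff, hlip⟩, hdata⟩ i j
    have hgrad : ∀ x, HasGradientAt f (gradient f x) x := fun x => (hdiff x).hasGradientAt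
    have hui : ∀ k, u k = gradient f (y k) := fun k =>
      subgradient_eq (hgrad (y k)) ((hdata k).2)
    set g : H → ℝ := fun x => f x - σ / 2 * ‖x‖ ^ 2 with hg
    set g' : H → H := fun x => gradient f x - σ • x with hg'
    have hgg : ∀ x, HasGradientAt g (g' x) x := by
      intro x
      have h2 : HasGradientAt (fun z : H => σ / 2 * ‖z‖ ^ 2) (σ • x) x := by
        have := hasGradientAt_const_mul_norm_sq (σ / 2) x
        rw [show (2 * (σ / 2) : ℝ) = σ by ring] at this
        exact this
      exact (hgrad x).sub' h2
    have hconvg : ConvexOn ℝ Set.univ g := hsc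
    have hlowg : ∀ a w, g a + (inner ℝ (g' a) (w - a) : ℝ) ≤ g w := fun a w =>
      convexOn_subgradient hconvg (hgg a) w
    have hupg : ∀ a w, g w ≤ g a + (inner ℝ (g' a) (w - a) : ℝ) + L / 2 * ‖w - a‖ ^ 2 := by
      intro a w
      have hd := descent_lemma hgrad hlip a w
      have hq := quad_id σ a w
      have hs : (inner ℝ (g' a) (w - a) : ℝ)
          = (inner ℝ (gradient f a) (w - a) : ℝ) - (inner ℝ (σ • a) (w - a) : ℝ) := by
        rw [hg']
        exact inner_sub_left _ _ _
      rw [hg']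
      show f w - σ / 2 * ‖w‖ ^ 2 ≤ f a - σ / 2 * ‖a‖ ^ 2
        + (inner ℝ (gradient f a - σ • a) (w - a) : ℝ) + L / 2 * ‖w - a‖ ^ 2
      rw [inner_sub_left]
      have hLL : L / 2 * ‖w - a‖ ^ 2 = β / 2 * ‖w - a‖ ^ 2 - σ / 2 * ‖w - a‖ ^ 2 := by
        rw [hLdef]; ring
      linarith
    have hco := cocoercive hL hlowg hupg (y j) (y i)
    have hco' : f (y j) - σ / 2 * ‖y j‖ ^ 2
        + (inner ℝ (gradient f (y j) - σ • (y j)) (y i - y j) : ℝ)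
        + 1 / (2 * L) * ‖(gradient f (y i) - σ • (y i)) - (gradient f (y j) - σ • (y j))‖ ^ 2
        ≤ f (y i) - σ / 2 * ‖y i‖ ^ 2 := hco
    rw [← hui i, ← hui j, (hdata i).1, (hdata j).1] at hco'
    have hnorm : ‖(u i - σ • (y i)) - (u j - σ • (y j))‖
        = ‖u i - u j - σ • (y i - y j)‖ := by
      congr 1
      module
    rw [hnorm] at hco'
    have hq := quad_id σ (y j) (y i)
    have hs : (inner ℝ (u j - σ • (y j)) (y i - y j) : ℝ)
        = (inner ℝ (u j) (y i - y j) : ℝ) - (inner ℝ (σ • (y j)) (y i - y j) : ℝ) :=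
      inner_sub_left _ _ _
    rw [hs] at hco'
    linarith
  · intro h
    rcases isEmpty_or_nonempty ι with hemp | hne
    · refine ⟨fun x => σ / 2 * ‖x‖ ^ 2, ?_, ?_, fun i => isEmptyElim i⟩
      · exact convexOn_of_subgradients (g' := fun _ => (0 : H)) (by intro a w; simp)
      · have hgr : ∀ x : H, HasGradientAt (fun x : H => σ / 2 * ‖x‖ ^ 2) (σ • x) x := by
          intro x
          have := hasGradientAt_const_mul_norm_sq (σ / 2) x
          rwa [show (2 * (σ / 2) : ℝ) = σ by ring] at this
        constructor
        · exact fun x => ((hgr x).hasFDerivAt).differentiableAt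
        · intro x z
          rw [(hgr x).gradient, (hgr z).gradient, ← smul_sub, norm_smul,
            Real.norm_eq_abs, abs_of_nonneg hσ]
          exact mul_le_mul_of_nonneg_right (le_of_lt hσβ) (norm_nonneg _)
    · set G : ι → ℝ := fun i => F i - σ / 2 * ‖y i‖ ^ 2 with hG
      set v : ι → H := fun i => u i - σ • (y i) with hv
      have hint : ∀ i j, G j + (inner ℝ (v j) (y i - y j) : ℝ)
          + 1 / (2 * L) * ‖v i - v j‖ ^ 2 ≤ G i := by
        intro i j
        have h1 := h i j
        have hnorm : ‖v i - v j‖ = ‖u i - u j - σ • (y i - y j)‖ := by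
          rw [hv]
          congr 1
          module
        have hq := quad_id σ (y j) (y i)
        have hs : (inner ℝ (v j) (y i - y j) : ℝ)
            = (inner ℝ (u j) (y i - y j) : ℝ) - (inner ℝ (σ • (y j)) (y i - y j) : ℝ) := by
          rw [hv]
          exact inner_sub_left _ _ _
        show F j - σ / 2 * ‖y j‖ ^ 2 + (inner ℝ (v j) (y i - y j) : ℝ)
          + 1 / (2 * L) * ‖v i - v j‖ ^ 2 ≤ F i - σ / 2 * ‖y i‖ ^ 2
        rw [hs, hnorm]
        linarith
      obtain ⟨F₀, s₀, hlow, hup, hval, hsubg⟩ := construction hL y G v hint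
      have hgradF : ∀ x, HasGradientAt F₀ (s₀ x) x := fun x =>
        hasGradientAt_of_sandwich (le_of_lt hL) (fun w => hlow x w) (fun w => hup x w)
      set f : H → ℝ := fun x => F₀ x + σ / 2 * ‖x‖ ^ 2 with hf
      have hgradf : ∀ x, HasGradientAt f (s₀ x + σ • x) x := by
        intro x
        have h2 : HasGradientAt (fun z : H => σ / 2 * ‖z‖ ^ 2) (σ • x) x := by
          have := hasGradientAt_const_mul_norm_sq (σ / 2) x
          rwa [show (2 * (σ / 2) : ℝ) = σ by ring] at this
        exact (hgradF x).add' h2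
      refine ⟨f, ?_, ?_, fun i => ⟨?_, ?_⟩⟩
      · apply convexOn_of_subgradients (g' := s₀)
        intro a w
        show f a - σ / 2 * ‖a‖ ^ 2 + (inner ℝ (s₀ a) (w - a) : ℝ) ≤ f w - σ / 2 * ‖w‖ ^ 2
        rw [hf]
        have := hlow a w
        show F₀ a + σ / 2 * ‖a‖ ^ 2 - σ / 2 * ‖a‖ ^ 2 + (inner ℝ (s₀ a) (w - a) : ℝ)
          ≤ F₀ w + σ / 2 * ‖w‖ ^ 2 - σ / 2 * ‖w‖ ^ 2
        linarith
      · constructor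
        · exact fun x => ((hgradf x).hasFDerivAt).differentiableAt
        · intro a b
          rw [(hgradf a).gradient, (hgradf b).gradient]
          have hco := cocoercive hL hlow hup
          have hslip := lipschitz_of_cocoercive hL hco a b
          have he : (s₀ a + σ • a) - (s₀ b + σ • b) = (s₀ a - s₀ b) + σ • (a - b) := by
            module
          rw [he]
          calc ‖(s₀ a - s₀ b) + σ • (a - b)‖ ≤ ‖s₀ a - s₀ b‖ + ‖σ • (a - b)‖ :=
              norm_add_le _ _
            _ ≤ L * ‖a - b‖ + σ * ‖a - b‖ := by
              have : ‖σ • (a - b)‖ = σ * ‖a - b‖ := by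
                rw [norm_smul, Real.norm_eq_abs, abs_of_nonneg hσ]
              rw [this]
              linarith [hslip]
            _ = β * ‖a - b‖ := by rw [hLdef]; ring
      · show F₀ (y i) + σ / 2 * ‖y i‖ ^ 2 = F i
        rw [hval i, hG]
        ring
      · intro z
        show f (y i) + (inner ℝ (u i) (z - y i) : ℝ) ≤ f z
        have h1 := hsubg i z
        have hq := quad_id σ (y i) z
        have hu : (inner ℝ (u i) (z - y i) : ℝ)
            = (inner ℝ (v i) (z - y i) : ℝ) + (inner ℝ (σ • (y i)) (z - y i) : ℝ) := by
          rw [hv, ← inner_add_left]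
          congr 1
          module
        show F₀ (y i) + σ / 2 * ‖y i‖ ^ 2 + (inner ℝ (u i) (z - y i) : ℝ)
          ≤ F₀ z + σ / 2 * ‖z‖ ^ 2
        rw [hu]
        have hsq : (0:ℝ) ≤ σ / 2 * ‖z - y i‖ ^ 2 := by positivity
        linarith
end

section
/- Let H be a real Hilbert space, let σ ≥ 0, and let {(y_i, F_i, u_i)}_{i∈I} be a finite family of triplets in H × ℝ × H. Then the following are equivalent: (i) there exists a function f : H → ℝ that is lower semicontinuous and σ-strongly convex such that f(y_i) = F_i and u_i ∈ ∂f(y_i) for every i ∈ I; (ii) for all i, j ∈ I one has F_i ≥ F_j + ⟨u_j, y_i − y_j⟩ + (σ/2)‖y_i − y_j‖². -/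
private lemma convexOn_sup' {H : Type*} [NormedAddCommGroup H] [InnerProductSpace ℝ H]
    {ι : Type*} (s : Finset ι) (hs : s.Nonempty) (φ : ι → H → ℝ)
    (h : ∀ i, ConvexOn ℝ Set.univ (φ i)) :
    ConvexOn ℝ Set.univ (fun x => s.sup' hs fun i => φ i x) := by
  induction hs using Finset.Nonempty.cons_induction with
  | singleton a => simp only [Finset.sup'_singleton]; exact h a
  | cons a s ha hs ih =>
    have e : (fun x => (Finset.cons a s ha).sup' (Finset.cons_nonempty ha) fun i => φ i x)
        = fun x => (φ a x) ⊔ (s.sup' hs fun i => φ i x) :=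
      funext fun x => Finset.sup'_cons hs _
    rw [e]
    exact (h a).sup ih

private lemma continuous_sup' {H : Type*} [NormedAddCommGroup H] [InnerProductSpace ℝ H]
    {ι : Type*} (s : Finset ι) (hs : s.Nonempty) (φ : ι → H → ℝ)
    (h : ∀ i, Continuous (φ i)) :
    Continuous (fun x => s.sup' hs fun i => φ i x) := by
  induction hs using Finset.Nonempty.cons_induction with
  | singleton a => simp only [Finset.sup'_singleton]; exact h a
  | cons a s ha hs ih =>
    have e : (fun x => (Finset.cons a s ha).sup' (Finset.cons_nonempty ha) fun i => φ i x)
        = fun x => (φ a x) ⊔ (s.sup' hs fun i => φ i x) :=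
      funext fun x => Finset.sup'_cons hs _
    rw [e]
    exact (h a).max ih

private lemma convexOn_inner_affine {H : Type*} [NormedAddCommGroup H] [InnerProductSpace ℝ H]
    (v : H) (c : ℝ) : ConvexOn ℝ Set.univ (fun x => (inner ℝ v x : ℝ) + c) := by
  refine ⟨convex_univ, fun x _ z _ a b ha hb hab => le_of_eq ?_⟩
  simp only [inner_add_right, real_inner_smul_right, smul_eq_mul]
  linear_combination -c * hab

/-- Interpolation theorem for the class of lower semicontinuous `σ`-strongly convex
functions on a real Hilbert space (the case `β = +∞`, with a real-valued
interpolating function). -/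
theorem interpolation_lsc_strongly_convex
    {H : Type*} [NormedAddCommGroup H] [InnerProductSpace ℝ H]
    {ι : Type*} [Fintype ι]
    (σ : ℝ) (hσ : 0 ≤ σ)
    (y : ι → H) (F : ι → ℝ) (u : ι → H) :
    (∃ f : H → ℝ, LowerSemicontinuous f ∧ StronglyConvex σ f ∧
        ∀ i, f (y i) = F i ∧ IsSubgradientAt f (u i) (y i)) ↔
      ∀ i j, F j + (inner ℝ (u j) (y i - y j) : ℝ) + σ / 2 * ‖y i - y j‖ ^ 2 ≤ F i := by
  constructor
  · rintro ⟨f, _, hconv, hint⟩ i j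
    set d := y i - y j with hd
    refine le_of_forall_pos_le_add fun ε hε => ?_
    -- choose t small
    set C := σ / 2 * ‖d‖ ^ 2 with hC
    have hC0 : 0 ≤ C := by positivity
    obtain ⟨t, ht0, ht1, htC⟩ : ∃ t : ℝ, 0 < t ∧ t ≤ 1 ∧ t * C ≤ ε := by
      rcases eq_or_lt_of_le hC0 with h0 | h0
      · exact ⟨1, one_pos, le_refl 1, by rw [one_mul, ← h0]; exact hε.le⟩
      · refine ⟨min 1 (ε / C), lt_min one_pos (div_pos hε h0), min_le_left _ _, ?_⟩
        calc min 1 (ε / C) * C ≤ (ε / C) * C := by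
              apply mul_le_mul_of_nonneg_right (min_le_right _ _) hC0
          _ = ε := by field_simp
    set z := (1 - t) • y j + t • y i with hz
    have hzd : z - y j = t • d := by
      rw [hz, hd]; module
    have hzy : z = y j + t • d := by rw [hz, hd]; module
    have hcv := hconv.2 (Set.mem_univ (y j)) (Set.mem_univ (y i))
      (by linarith : (0:ℝ) ≤ 1 - t) (le_of_lt ht0) (by ring)
    rw [← hz] at hcv
    simp only [smul_eq_mul] at hcv
    have hsub := (hint j).2 z
    rw [hzd, real_inner_smul_right] at hsub
    have hnz : ‖z‖ ^ 2 = ‖y j‖ ^ 2 + 2 * (t * (inner ℝ (y j) d : ℝ)) + t ^ 2 * ‖d‖ ^ 2 := by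
      rw [hzy, norm_add_sq_real, real_inner_smul_right, norm_smul]
      simp [mul_pow]
    have hjd : (inner ℝ (y j) d : ℝ) = (inner ℝ (y j) (y i) : ℝ) - ‖y j‖ ^ 2 := by
      rw [hd, inner_sub_right, real_inner_self_eq_norm_sq]
    have hdd : ‖d‖ ^ 2 = ‖y i‖ ^ 2 - 2 * (inner ℝ (y j) (y i) : ℝ) + ‖y j‖ ^ 2 := by
      rw [hd, norm_sub_sq_real, real_inner_comm]
    have hfi : f (y i) = F i := (hint i).1
    have hfj : f (y j) = F j := (hint j).1
    rw [hfi, hfj] at hcv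
    rw [hfj] at hsub
    rw [hnz] at hcv
    rw [hjd] at hcv
    have key : t * ((inner ℝ (u j) d : ℝ) + σ / 2 * (1 - t) * ‖d‖ ^ 2) ≤ t * (F i - F j) := by
      rw [hdd] at hcv ⊢
      linarith [hcv, hsub]
    have key2 : (inner ℝ (u j) d : ℝ) + σ / 2 * (1 - t) * ‖d‖ ^ 2 ≤ F i - F j :=
      (mul_le_mul_iff_right₀ ht0).mp key
    rw [hC] at htC ⊢
    linarith [key2, htC]
  · intro hineq
    rcases isEmpty_or_nonempty ι with hI | hI
    · refine ⟨fun x => σ / 2 * ‖x‖ ^ 2, ?_, ?_, fun i => isEmptyElim i⟩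
      · exact (Continuous.lowerSemicontinuous (by continuity))
      · unfold StronglyConvex
        simp only [sub_self]
        exact convexOn_const 0 convex_univ
    · have hne : (Finset.univ : Finset ι).Nonempty := Finset.univ_nonempty
      set φ : ι → H → ℝ := fun i x =>
        F i + (inner ℝ (u i) (x - y i) : ℝ) + σ / 2 * ‖x - y i‖ ^ 2 with hφ
      refine ⟨fun x => Finset.univ.sup' hne fun i => φ i x, ?_, ?_, fun i => ⟨?_, ?_⟩⟩
      · apply Continuous.lowerSemicontinuous
        apply continuous_sup'
        intro i
        apply Continuous.add
        apply Continuous.add continuous_const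
        · exact Continuous.inner continuous_const (continuous_id.sub continuous_const)
        · continuity
      · unfold StronglyConvex
        have heq : (fun x => (Finset.univ.sup' hne fun i => φ i x) - σ / 2 * ‖x‖ ^ 2) =
            fun x => Finset.univ.sup' hne fun i => φ i x - σ / 2 * ‖x‖ ^ 2 := by
          funext x
          exact Finset.comp_sup'_eq_sup'_comp hne (fun r => r - σ / 2 * ‖x‖ ^ 2)
            (fun a b => (max_sub_sub_right a b _).symm)
        rw [heq]
        apply convexOn_sup'
        intro i
        have : (fun x => φ i x - σ / 2 * ‖x‖ ^ 2) = fun x =>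
            (inner ℝ (u i - σ • y i) x : ℝ) +
              (F i - (inner ℝ (u i) (y i) : ℝ) + σ / 2 * ‖y i‖ ^ 2) := by
          funext x
          rw [hφ]
          simp only [inner_sub_left, inner_sub_right, real_inner_smul_left,
            norm_sub_sq_real]
          ring_nf
          rw [real_inner_comm (y i) x]
          ring
        rw [this]
        exact convexOn_inner_affine _ _
      · apply le_antisymm
        · apply Finset.sup'_le
          intro j _
          exact hineq i j
        · apply Finset.le_sup'_of_le _ (Finset.mem_univ i)
          simp [hφ]
      · intro z
        have h1 : φ i z ≤ Finset.univ.sup' hne fun j => φ j z :=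
          Finset.le_sup' (fun j => φ j z) (Finset.mem_univ i)
        have h2 : Finset.univ.sup' hne (fun j => φ j (y i)) = F i := by
          apply le_antisymm
          · exact Finset.sup'_le _ _ fun j _ => hineq i j
          · apply Finset.le_sup'_of_le _ (Finset.mem_univ i); simp [hφ]
        dsimp only
        rw [h2]
        have : F i + (inner ℝ (u i) (z - y i) : ℝ) ≤ φ i z := by
          rw [hφ]; nlinarith [sq_nonneg ‖z - y i‖, hσ]
        linarith
end

section
/- Suppose H ≠ {0} and the algorithm has the fixed-point encoding property, i.e. for every choice of f_i ∈ F_{σ_i,β_i}(H) (i = 1,…,m): (a) whenever y⋆ ∈ H satisfies 0 ∈ Σ_{i=1}^m ∂f_i(y⋆), there exist x⋆ ∈ H^n, u⋆ ∈ H^m and F⋆ ∈ ℝ^m such that (x⋆, u⋆, (y⋆,…,y⋆), F⋆) is a fixed point with Σ_{i=1}^m u⋆_i = 0; and (b) every fixed point (x⋆, u⋆, y⋆, F⋆) satisfies y⋆_1 = … = y⋆_m and Σ_{i=1}^m u⋆_i = 0. Then Assumption 1 holds. -/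
open scoped ENNReal
open Matrix

/-- Membership in the function class `F_{σ,β}(H)`. -/
def MemFClass {H : Type*} [NormedAddCommGroup H] [InnerProductSpace ℝ H]
    [CompleteSpace H] (σ : ℝ) (β : ℝ≥0∞) (f : H → ℝ) : Prop :=
  StronglyConvex σ f ∧ (β ≠ ⊤ → IsSmoothWith β.toReal f) ∧
    (β = ⊤ → LowerSemicontinuous f)

/-- `(M ⊗ Id) z` for a real matrix `M` acting on tuples of Hilbert-space vectors. -/
def matVecH {H : Type*} [AddCommGroup H] [Module ℝ H] {p q : Type*} [Fintype q]
    (M : Matrix p q ℝ) (z : q → H) : p → H :=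
  fun i => ∑ j, M i j • z j

/-- The point `(x, u, y, F)` is algorithm-consistent for `f`. -/
def AlgConsistent {H : Type*} [NormedAddCommGroup H] [InnerProductSpace ℝ H]
    {n m : ℕ} (C : Matrix (Fin m) (Fin n) ℝ) (D : Matrix (Fin m) (Fin m) ℝ)
    (f : Fin m → H → ℝ) (x : Fin n → H) (u y : Fin m → H) (F : Fin m → ℝ) : Prop :=
  y = matVecH C x + matVecH D u ∧ (∀ i, IsSubgradientAt (f i) (u i) (y i)) ∧
    ∀ i, F i = f i (y i)

/-- `(x, u, y, F)` is a fixed point of the algorithm. -/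
def IsFixedPoint {H : Type*} [NormedAddCommGroup H] [InnerProductSpace ℝ H]
    {n m : ℕ} (A : Matrix (Fin n) (Fin n) ℝ) (B : Matrix (Fin n) (Fin m) ℝ)
    (C : Matrix (Fin m) (Fin n) ℝ) (D : Matrix (Fin m) (Fin m) ℝ)
    (f : Fin m → H → ℝ) (x : Fin n → H) (u y : Fin m → H) (F : Fin m → ℝ) : Prop :=
  x = matVecH A x + matVecH B u ∧ AlgConsistent C D f x u y F

/-- `(xp, up, yp, Fp)` is a successor of an algorithm-consistent point with data `(x, u)`. -/
def IsSuccessor {H : Type*} [NormedAddCommGroup H] [InnerProductSpace ℝ H]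
    {n m : ℕ} (A : Matrix (Fin n) (Fin n) ℝ) (B : Matrix (Fin n) (Fin m) ℝ)
    (C : Matrix (Fin m) (Fin n) ℝ) (D : Matrix (Fin m) (Fin m) ℝ)
    (f : Fin m → H → ℝ) (x : Fin n → H) (u : Fin m → H)
    (xp : Fin n → H) (up yp : Fin m → H) (Fp : Fin m → ℝ) : Prop :=
  xp = matVecH A x + matVecH B u ∧ AlgConsistent C D f xp up yp Fp

/-- The matrix `N = [I_{m−1}; −𝟏ᵀ] ∈ ℝ^{m×(m−1)}`. -/
def Nmat (m : ℕ) : Matrix (Fin m) (Fin (m - 1)) ℝ :=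
  Matrix.of fun i j => if (i : ℕ) = (j : ℕ) then 1 else if (i : ℕ) = m - 1 then -1 else 0

/-- Assumption 1: the range and null-space conditions on `(A, B, C, D)`. -/
def Assumption1 {n m : ℕ} (A : Matrix (Fin n) (Fin n) ℝ) (B : Matrix (Fin n) (Fin m) ℝ)
    (C : Matrix (Fin m) (Fin n) ℝ) (D : Matrix (Fin m) (Fin m) ℝ) : Prop :=
  LinearMap.range (Matrix.fromBlocks (B * Nmat m) 0 (D * Nmat m)
      (Matrix.of fun (_ : Fin m) (_ : Fin 1) => (-1 : ℝ))).mulVecLin ≤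
    LinearMap.range (Matrix.fromRows (1 - A) (-C)).mulVecLin ∧
  LinearMap.ker (Matrix.fromCols (1 - A) (-B)).mulVecLin ≤
    LinearMap.ker (Matrix.fromBlocks ((Nmat m)ᵀ * C) ((Nmat m)ᵀ * D) 0
      (Matrix.of fun (_ : Fin 1) (_ : Fin m) => (1 : ℝ))).mulVecLin

/-- Assumption 2: `D` lower triangular with nonpositive diagonal, and for each `i`
either `β_i < +∞` or `D_{ii} < 0`. -/
def Assumption2 {m : ℕ} (β : Fin m → ℝ≥0∞) (D : Matrix (Fin m) (Fin m) ℝ) : Prop :=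
  (∀ i j : Fin m, (i : ℕ) < (j : ℕ) → D i j = 0) ∧ (∀ i, D i i ≤ 0) ∧
    ∀ i, β i ≠ ⊤ ∨ D i i < 0


section Aux

open InnerProductSpace

variable {H : Type*} [NormedAddCommGroup H] [InnerProductSpace ℝ H] [CompleteSpace H]

lemma quad_hasGradient (c : H) (σ : ℝ) (x : H) :
    HasGradientAt (fun z : H => (inner ℝ c z : ℝ) + σ / 2 * ‖z‖ ^ 2) (c + σ • x) x := by
  rw [hasGradientAt_iff_hasFDerivAt]
  have h1 : HasFDerivAt (fun z : H => (inner ℝ c z : ℝ)) (innerSL ℝ c) x :=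
    (innerSL ℝ c).hasFDerivAt
  have h2 : HasFDerivAt (fun z : H => (inner ℝ z z : ℝ))
      ((fderivInnerCLM ℝ (x, x)).comp ((ContinuousLinearMap.id ℝ H).prod
        (ContinuousLinearMap.id ℝ H))) x :=
    (hasFDerivAt_id x).inner (𝕜 := ℝ) (hasFDerivAt_id x)
  have h3 : HasFDerivAt (fun z : H => (inner ℝ c z : ℝ) + σ / 2 * (inner ℝ z z : ℝ))
      (innerSL ℝ c + (σ / 2) • ((fderivInnerCLM ℝ (x, x)).comp
        ((ContinuousLinearMap.id ℝ H).prod (ContinuousLinearMap.id ℝ H)))) x :=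
    h1.add (h2.const_smul (σ / 2))
  have heq : (fun z : H => (inner ℝ c z : ℝ) + σ / 2 * (inner ℝ z z : ℝ)) =
      (fun z : H => (inner ℝ c z : ℝ) + σ / 2 * ‖z‖ ^ 2) := by
    funext z; rw [real_inner_self_eq_norm_sq]
  rw [heq] at h3
  refine h3.congr_fderiv ?_
  ext v
  simp [toDual_apply_apply, inner_add_left, inner_smul_left, fderivInnerCLM_apply,
    real_inner_comm x v]
  ring

lemma quad_gradient (c : H) (σ : ℝ) (x : H) :
    gradient (fun z : H => (inner ℝ c z : ℝ) + σ / 2 * ‖z‖ ^ 2) x = c + σ • x :=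
  (quad_hasGradient c σ x).gradient

lemma quad_memFClass (c : H) {σ : ℝ} {β : ℝ≥0∞} (hσ : 0 ≤ σ)
    (hβ : ENNReal.ofReal σ < β) :
    MemFClass σ β (fun z : H => (inner ℝ c z : ℝ) + σ / 2 * ‖z‖ ^ 2) := by
  refine ⟨?_, ?_, ?_⟩
  · have : (fun x : H => ((inner ℝ c x : ℝ) + σ / 2 * ‖x‖ ^ 2) - σ / 2 * ‖x‖ ^ 2) =
        (fun x : H => (inner ℝ c x : ℝ)) := by funext x; ring
    rw [StronglyConvex, this]
    refine ⟨convex_univ, ?_⟩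
    intro x _ y _ s t hs ht hst
    simp only [inner_add_right, inner_smul_right, smul_eq_mul]
    exact le_of_eq rfl
  · intro hβtop
    have hσβ : σ < β.toReal :=
      (ENNReal.ofReal_lt_iff_lt_toReal hσ hβtop).mp hβ
    constructor
    · intro x
      exact ((quad_hasGradient c σ x).differentiableAt)
    · intro x y
      rw [quad_gradient, quad_gradient]
      have : c + σ • x - (c + σ • y) = σ • (x - y) := by
        module
      rw [this, norm_smul]
      simp only [Real.norm_eq_abs, abs_of_nonneg hσ]
      exact mul_le_mul_of_nonneg_right hσβ.le (norm_nonneg _)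
  · intro _
    exact (by fun_prop : Continuous (fun z : H => (inner ℝ c z : ℝ) + σ / 2 * ‖z‖ ^ 2)).lowerSemicontinuous

lemma quad_subgradient (c : H) {σ : ℝ} (hσ : 0 ≤ σ) (y : H) :
    IsSubgradientAt (fun z : H => (inner ℝ c z : ℝ) + σ / 2 * ‖z‖ ^ 2) (c + σ • y) y := by
  intro z
  have hsq : (0:ℝ) ≤ ‖z - y‖ ^ 2 := by positivity
  have hexp : ‖z - y‖ ^ 2 = ‖z‖ ^ 2 - 2 * (inner ℝ z y : ℝ) + ‖y‖ ^ 2 :=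
    norm_sub_sq_real z y
  simp only [inner_add_left, inner_smul_left, inner_sub_right, RCLike.star_def,
    starRingEnd_apply, star_trivial]
  have h1 : (inner ℝ c (z - y) : ℝ) = inner ℝ c z - inner ℝ c y := inner_sub_right c z y
  have h2 : (inner ℝ y (z - y) : ℝ) = inner ℝ y z - inner ℝ y y := inner_sub_right y z y
  have h3 : (inner ℝ y y : ℝ) = ‖y‖ ^ 2 := real_inner_self_eq_norm_sq y
  have h4 : (inner ℝ y z : ℝ) = inner ℝ z y := real_inner_comm z y
  nlinarith [mul_nonneg hσ hsq]

lemma quad_subgradient_unique (c : H) {σ : ℝ} (hσ : 0 ≤ σ) (y u : H)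
    (hu : IsSubgradientAt (fun z : H => (inner ℝ c z : ℝ) + σ / 2 * ‖z‖ ^ 2) u y) :
    u = c + σ • y := by
  by_contra hne
  set v := u - (c + σ • y) with hv
  have hvne : v ≠ 0 := fun h0 => hne (by rwa [hv, sub_eq_zero] at h0)
  have hv2 : 0 < ‖v‖ ^ 2 := by have := norm_pos_iff.mpr hvne; positivity
  set t : ℝ := 1 / (σ + 1) with ht
  have hσ1 : 0 < σ + 1 := by linarith
  have htpos : 0 < t := by positivity
  have hts : t * (σ + 1) = 1 := by rw [ht]; field_simp
  have h := hu (y + t • v)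
  beta_reduce at h
  have hsub : y + t • v - y = t • v := by abel
  rw [hsub] at h
  have hnorm : ‖y + t • v‖ ^ 2 = ‖y‖ ^ 2 + 2 * (t * (inner ℝ y v : ℝ)) + t ^ 2 * ‖v‖ ^ 2 := by
    rw [norm_add_sq_real, real_inner_smul_right, norm_smul, mul_pow, Real.norm_eq_abs, sq_abs]
  have hinner_u : (inner ℝ u (t • v) : ℝ) = t * inner ℝ u v := real_inner_smul_right u v t
  have hinner_c : (inner ℝ c (y + t • v) : ℝ) = inner ℝ c y + t * inner ℝ c v := by
    rw [inner_add_right, real_inner_smul_right]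
  have huv : (inner ℝ u v : ℝ) = inner ℝ c v + σ * inner ℝ y v + ‖v‖ ^ 2 := by
    have h1 : (inner ℝ v v : ℝ) = inner ℝ u v - inner ℝ c v - σ * inner ℝ y v := by
      rw [hv, inner_sub_left, inner_add_left, real_inner_smul_left]; ring
    have h2 : (inner ℝ v v : ℝ) = ‖v‖ ^ 2 := real_inner_self_eq_norm_sq v
    linarith
  rw [hinner_u, hinner_c, hnorm, huv] at h
  have key : t * ‖v‖ ^ 2 ≤ σ / 2 * (t ^ 2 * ‖v‖ ^ 2) := by nlinarith
  nlinarith [mul_pos htpos hv2, mul_pos (mul_pos htpos htpos) hv2]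

lemma matVecH_smul {p q : Type*} [Fintype q] (M : Matrix p q ℝ) (v : q → ℝ) (e : H) (i : p) :
    matVecH M (fun j => v j • e) i = (M.mulVec v) i • e := by
  simp [matVecH, Matrix.mulVec, dotProduct, Finset.sum_smul, smul_smul]

lemma inner_matVecH {p q : Type*} [Fintype q] (M : Matrix p q ℝ) (x : q → H) (e : H) (i : p) :
    (inner ℝ e (matVecH M x i) : ℝ) = M.mulVec (fun j => (inner ℝ e (x j) : ℝ)) i := by
  simp [matVecH, Matrix.mulVec, dotProduct, inner_sum, real_inner_smul_right]

lemma Nmat_col_sum (m : ℕ) (j : Fin (m - 1)) : ∑ i, Nmat m i j = 0 := by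
  have hj : (j : ℕ) < m - 1 := j.isLt
  have hm2 : 2 ≤ m := by omega
  set j0 : Fin m := ⟨j, by omega⟩ with hj0
  set lst : Fin m := ⟨m - 1, by omega⟩ with hlst
  have hne : j0 ≠ lst := by
    simp only [hj0, hlst, Ne, Fin.mk.injEq]
    omega
  have key : ∀ i : Fin m, Nmat m i j =
      (if i = j0 then (1:ℝ) else 0) + (if i = lst then (-1:ℝ) else 0) := by
    intro i
    simp only [Nmat, Matrix.of_apply]
    by_cases h1 : (i : ℕ) = (j : ℕ)
    · have hij0 : i = j0 := by apply Fin.ext; simpa using h1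
      rw [if_pos h1, if_pos hij0, if_neg (hij0 ▸ hne)]
      norm_num
    · have hij0 : i ≠ j0 := by
        intro hcon; exact h1 (by simp [hcon, hj0])
      rw [if_neg h1, if_neg hij0]
      by_cases h2 : (i : ℕ) = m - 1
      · have : i = lst := by apply Fin.ext; simpa using h2
        rw [if_pos h2, if_pos this]
        norm_num
      · have : i ≠ lst := by
          intro hcon; exact h2 (by simp [hcon, hlst])
        rw [if_neg h2, if_neg this]
        norm_num
  rw [Finset.sum_congr rfl (fun i _ => key i), Finset.sum_add_distrib]
  simp

lemma Nmat_mulVec_sum (m : ℕ) (w : Fin (m - 1) → ℝ) :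
    ∑ i, (Nmat m).mulVec w i = 0 := by
  simp only [Matrix.mulVec, dotProduct]
  rw [Finset.sum_comm]
  refine Finset.sum_eq_zero fun j _ => ?_
  rw [← Finset.sum_mul, Nmat_col_sum, zero_mul]

end Aux

/-- If `H ≠ {0}` and the algorithm has the fixed-point encoding property, then
Assumption 1 holds. -/
theorem fixed_point_encoding_implies_assumption1
    {H : Type*} [NormedAddCommGroup H] [InnerProductSpace ℝ H] [CompleteSpace H]
    [Nontrivial H]
    {n m : ℕ} (hn : 1 ≤ n) (hm : 1 ≤ m)
    (A : Matrix (Fin n) (Fin n) ℝ) (B : Matrix (Fin n) (Fin m) ℝ)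
    (C : Matrix (Fin m) (Fin n) ℝ) (D : Matrix (Fin m) (Fin m) ℝ)
    (σ : Fin m → ℝ) (β : Fin m → ℝ≥0∞)
    (hσβ : ∀ i, 0 ≤ σ i ∧ ENNReal.ofReal (σ i) < β i)
    (henc : ∀ f : Fin m → H → ℝ, (∀ i, MemFClass (σ i) (β i) (f i)) →
      ((∀ ystar : H,
          (∃ u : Fin m → H, (∀ i, IsSubgradientAt (f i) (u i) ystar) ∧ ∑ i, u i = 0) →
          ∃ (xs : Fin n → H) (us : Fin m → H) (Fs : Fin m → ℝ),
            IsFixedPoint A B C D f xs us (fun _ => ystar) Fs ∧ ∑ i, us i = 0) ∧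
      (∀ (xs : Fin n → H) (us ys : Fin m → H) (Fs : Fin m → ℝ),
          IsFixedPoint A B C D f xs us ys Fs →
            (∀ i j, ys i = ys j) ∧ ∑ i, us i = 0))) :
    Assumption1 A B C D := by
  obtain ⟨e, he⟩ := exists_ne (0 : H)
  have hE : ((inner ℝ e e : ℝ)) ≠ 0 := by
    rw [real_inner_self_eq_norm_sq]
    exact pow_ne_zero 2 (norm_ne_zero_iff.mpr he)
  constructor
  · -- range condition
    rintro p ⟨q, rfl⟩
    set w : Fin (m - 1) → ℝ := q ∘ Sum.inl with hwdef
    set c0 : ℝ := q (Sum.inr 0) with hc0def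
    set uh : Fin m → ℝ := (Nmat m).mulVec w with huhdef
    have huhsum : ∑ i, uh i = 0 := Nmat_mulVec_sum m w
    set f : Fin m → H → ℝ :=
      fun i z => (inner ℝ (uh i • e - σ i • (c0 • e)) z : ℝ) + σ i / 2 * ‖z‖ ^ 2 with hfdef
    have hf : ∀ i, MemFClass (σ i) (β i) (f i) :=
      fun i => quad_memFClass _ (hσβ i).1 (hσβ i).2
    have hsg0 : ∀ i, IsSubgradientAt (f i) (uh i • e) (c0 • e) := by
      intro i
      have h := quad_subgradient (uh i • e - σ i • (c0 • e)) (hσβ i).1 (c0 • e)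
      have heq : uh i • e - σ i • (c0 • e) + σ i • (c0 • e) = uh i • e := by module
      rwa [heq] at h
    obtain ⟨xs, us, Fs, hfp, _⟩ := (henc f hf).1 (c0 • e)
      ⟨fun i => uh i • e, hsg0, by rw [← Finset.sum_smul, huhsum, zero_smul]⟩
    obtain ⟨hx, hy, hsg, _⟩ := hfp
    have hus : ∀ i, us i = uh i • e := by
      intro i
      have h := quad_subgradient_unique (uh i • e - σ i • (c0 • e)) (hσβ i).1
        (c0 • e) (us i) (hsg i)
      rw [h]; module
    set r : Fin n → ℝ := fun j => (inner ℝ e (xs j) : ℝ) with hrdef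
    set E : ℝ := (inner ℝ e e : ℝ) with hEdef
    have hmatB : ∀ i, matVecH B us i = (B.mulVec uh) i • e := by
      intro i
      rw [show us = fun j => uh j • e from funext hus]
      exact matVecH_smul B uh e i
    have hmatD : ∀ i, matVecH D us i = (D.mulVec uh) i • e := by
      intro i
      rw [show us = fun j => uh j • e from funext hus]
      exact matVecH_smul D uh e i
    have hstar : ∀ i, r i = A.mulVec r i + B.mulVec uh i * E := by
      intro i
      have h := congrFun hx i
      rw [Pi.add_apply, hmatB] at h
      have h2 := congrArg (fun z : H => (inner ℝ e z : ℝ)) h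
      beta_reduce at h2
      rw [inner_add_right, inner_matVecH, real_inner_smul_right] at h2
      exact h2
    have hstar2 : ∀ i, c0 * E = C.mulVec r i + D.mulVec uh i * E := by
      intro i
      have h := congrFun hy i
      rw [Pi.add_apply, hmatD] at h
      have h2 := congrArg (fun z : H => (inner ℝ e z : ℝ)) h
      beta_reduce at h2
      rw [inner_add_right, inner_matVecH, real_inner_smul_right,
        real_inner_smul_right] at h2
      exact h2
    set xh : Fin n → ℝ := fun j => r j / E with hxhdef
    have hmulxh : ∀ (M : Matrix (Fin m) (Fin n) ℝ) (i : Fin m),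
        M.mulVec xh i = M.mulVec r i / E := by
      intro M i
      have : xh = E⁻¹ • r := by
        funext j; simp [hxhdef, div_eq_inv_mul]
      rw [this, Matrix.mulVec_smul]
      simp [div_eq_inv_mul]
    have hmulxh' : ∀ (M : Matrix (Fin n) (Fin n) ℝ) (i : Fin n),
        M.mulVec xh i = M.mulVec r i / E := by
      intro M i
      have : xh = E⁻¹ • r := by
        funext j; simp [hxhdef, div_eq_inv_mul]
      rw [this, Matrix.mulVec_smul]
      simp [div_eq_inv_mul]
    refine ⟨xh, ?_⟩
    rw [Matrix.mulVecLin_apply, Matrix.mulVecLin_apply, Matrix.fromRows_mulVec,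
      Matrix.fromBlocks_mulVec]
    funext i
    cases i with
    | inl i =>
      simp only [Sum.elim_inl, Matrix.zero_mulVec, Pi.add_apply, Pi.zero_apply, add_zero]
      rw [← Matrix.mulVec_mulVec, Matrix.sub_mulVec, Matrix.one_mulVec, Pi.sub_apply]
      rw [show (Nmat m).mulVec (q ∘ Sum.inl) = uh from rfl]
      rw [hmulxh' A i]
      have h := hstar i
      have : xh i = r i / E := rfl
      rw [this]
      field_simp
      linarith
    | inr i =>
      simp only [Sum.elim_inr, Pi.add_apply]
      rw [← Matrix.mulVec_mulVec, Matrix.neg_mulVec, Pi.neg_apply]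
      rw [show (Nmat m).mulVec (q ∘ Sum.inl) = uh from rfl]
      rw [hmulxh C i]
      have hone : ((Matrix.of fun (_ : Fin m) (_ : Fin 1) => (-1 : ℝ)).mulVec
          (q ∘ Sum.inr)) i = -c0 := by
        simp [Matrix.mulVec, dotProduct, Fin.sum_univ_one, hc0def]
      rw [hone]
      have h := hstar2 i
      field_simp
      linarith
  · -- kernel condition
    intro v hv
    set xh : Fin n → ℝ := v ∘ Sum.inl with hxhdef
    set uh : Fin m → ℝ := v ∘ Sum.inr with huhdef
    have hvelim : v = Sum.elim xh uh := by funext i; cases i <;> rfl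
    rw [LinearMap.mem_ker, Matrix.mulVecLin_apply, hvelim,
      Matrix.fromCols_mulVec_sumElim] at hv
    have hxheq : ∀ i, xh i = A.mulVec xh i + B.mulVec uh i := by
      intro i
      have h := congrFun hv i
      simp only [Pi.add_apply, Pi.zero_apply, Matrix.sub_mulVec, Matrix.neg_mulVec,
        Matrix.one_mulVec, Pi.sub_apply, Pi.neg_apply] at h
      linarith
    set yh : Fin m → ℝ := fun i => C.mulVec xh i + D.mulVec uh i with hyhdef
    set f : Fin m → H → ℝ :=
      fun i z => (inner ℝ (uh i • e - σ i • (yh i • e)) z : ℝ) + σ i / 2 * ‖z‖ ^ 2 with hfdef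
    have hf : ∀ i, MemFClass (σ i) (β i) (f i) :=
      fun i => quad_memFClass _ (hσβ i).1 (hσβ i).2
    have hfp : IsFixedPoint A B C D f (fun j => xh j • e) (fun i => uh i • e)
        (fun i => yh i • e) (fun i => f i (yh i • e)) := by
      refine ⟨?_, ?_, ?_, fun i => rfl⟩
      · funext i
        rw [Pi.add_apply, matVecH_smul, matVecH_smul, ← add_smul, ← hxheq i]
      · funext i
        rw [Pi.add_apply, matVecH_smul, matVecH_smul, ← add_smul]
      · intro i
        have h := quad_subgradient (uh i • e - σ i • (yh i • e)) (hσβ i).1 (yh i • e)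
        have heq : uh i • e - σ i • (yh i • e) + σ i • (yh i • e) = uh i • e := by module
        rwa [heq] at h
    obtain ⟨hyeq, husum⟩ := (henc f hf).2 _ _ _ _ hfp
    have hyheq : ∀ i j, yh i = yh j := fun i j => smul_left_injective ℝ he (hyeq i j)
    have huhsum : ∑ i, uh i = 0 := by
      rw [← Finset.sum_smul] at husum
      exact (smul_eq_zero.mp husum).resolve_right he
    rw [LinearMap.mem_ker, Matrix.mulVecLin_apply, hvelim, Matrix.fromBlocks_mulVec]
    have hinl : Sum.elim xh uh ∘ Sum.inl = xh := rfl
    have hinr : Sum.elim xh uh ∘ Sum.inr = uh := rfl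
    rw [hinl, hinr]
    funext i
    cases i with
    | inl j =>
      simp only [Sum.elim_inl, Pi.add_apply, Pi.zero_apply]
      rw [← Matrix.mulVec_mulVec, ← Matrix.mulVec_mulVec]
      have expand : ∀ (g : Fin m → ℝ), ((Nmat m)ᵀ *ᵥ g) j = ∑ i, Nmat m i j * g i := by
        intro g
        simp [Matrix.mulVec, dotProduct, Matrix.transpose_apply]
      rw [expand, expand, ← Finset.sum_add_distrib]
      have : ∀ i : Fin m, Nmat m i j * (C.mulVec xh) i + Nmat m i j * (D.mulVec uh) i =
          Nmat m i j * yh (⟨0, hm⟩ : Fin m) := by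
        intro i
        rw [← mul_add]
        congr 1
        exact hyheq i ⟨0, hm⟩
      rw [Finset.sum_congr rfl (fun i _ => this i), ← Finset.sum_mul, Nmat_col_sum,
        zero_mul]
    | inr j =>
      simp only [Sum.elim_inr, Pi.add_apply, Pi.zero_apply, Matrix.zero_mulVec,
        zero_add]
      simpa [Matrix.mulVec, dotProduct] using huhsum
end

section
/- Suppose Assumption 2 holds: D is lower triangular with nonpositive diagonal entries, and for every i ∈ {1,…,m} either β_i < +∞ or D_{ii} < 0. Then for every choice of f_i ∈ F_{σ_i,β_i}(H) (i = 1,…,m) and every x ∈ H^n, there exist unique u ∈ H^m and y ∈ H^m such that y = (C⊗Id)x + (D⊗Id)u and u_i ∈ ∂f_i(y_i) for all i. Consequently, for any initial point x_0 ∈ H^n the algorithm x_{k+1} = (A⊗Id)x_k + (B⊗Id)u_k, y_k = (C⊗Id)x_k + (D⊗Id)u_k, u_k ∈ ∂f(y_k), F_k = f(y_k) produces a unique infinite sequence {(x_k, u_k, y_k, F_k)}_{k≥0}. -/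
open scoped ENNReal
open Matrix

section WellPosedAux

set_option linter.unusedSectionVars false

noncomputable def auxBuildP {α : Type*} [Zero α] {m : ℕ} (sol : Fin m → (Fin m → α) → α) :
    ℕ → Fin m → α
  | 0 => fun _ => 0
  | k + 1 => fun i => if (i : ℕ) = k then sol i (auxBuildP sol k) else auxBuildP sol k i


variable {H : Type*} [NormedAddCommGroup H] [InnerProductSpace ℝ H] [CompleteSpace H]

lemma aux_convexOn_normSq : ConvexOn ℝ (Set.univ : Set H) (fun x => ‖x‖ ^ 2) := by
  refine ⟨convex_univ, fun x _ y _ a b ha hb hab => ?_⟩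
  have h1 : ‖a • x + b • y‖ ≤ a * ‖x‖ + b * ‖y‖ := by
    calc ‖a • x + b • y‖ ≤ ‖a • x‖ + ‖b • y‖ := norm_add_le _ _
    _ = a * ‖x‖ + b * ‖y‖ := by
        rw [norm_smul, norm_smul, Real.norm_of_nonneg ha, Real.norm_of_nonneg hb]
  have h2 : (a * ‖x‖ + b * ‖y‖) ^ 2 ≤ a * ‖x‖ ^ 2 + b * ‖y‖ ^ 2 := by
    nlinarith [norm_nonneg x, norm_nonneg y, sq_nonneg (‖x‖ - ‖y‖), mul_nonneg ha hb]
  have h3 : ‖a • x + b • y‖ ^ 2 ≤ (a * ‖x‖ + b * ‖y‖) ^ 2 := by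
    nlinarith [h1, norm_nonneg (a • x + b • y)]
  simp only [smul_eq_mul]
  linarith


lemma aux_convexOn_of_strong {σ : ℝ} {f : H → ℝ} (hσ : 0 ≤ σ) (h : StronglyConvex σ f) :
    ConvexOn ℝ Set.univ f := by
  have h2 : ConvexOn ℝ (Set.univ : Set H) (fun x : H => σ / 2 * ‖x‖ ^ 2) := by
    have := aux_convexOn_normSq.smul (c := σ / 2) (by positivity) (E := H)
    simpa [smul_eq_mul] using this
  have heq : f = (fun x : H => f x - σ / 2 * ‖x‖ ^ 2) + (fun x : H => σ / 2 * ‖x‖ ^ 2) := by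
    funext x; simp
  rw [heq]; exact h.add h2


lemma aux_deriv_le_of_slope {φ : ℝ → ℝ} {d K : ℝ} (hφ : HasDerivAt φ d 0)
    (h : ∀ t : ℝ, 0 < t → t ≤ 1 → φ t - φ 0 ≤ t * K) : d ≤ K := by
  have ht : Filter.Tendsto (slope φ 0) (nhdsWithin 0 (Set.Ioi 0)) (nhds d) :=
    (hasDerivAt_iff_tendsto_slope.1 hφ).mono_left
      (nhdsWithin_mono _ (fun t ht => Set.mem_compl_singleton_iff.2 (ne_of_gt ht)))
  refine le_of_tendsto ht ?_
  filter_upwards [Ioc_mem_nhdsGT_of_mem (Set.left_mem_Ico.2 one_pos)] with t ht'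
  rw [slope_def_field]
  have h0 := h t ht'.1 ht'.2
  rw [div_le_iff₀ (by simpa using ht'.1)]
  simp only [sub_zero]
  linarith [h0]


lemma aux_slope_le_of_deriv {φ : ℝ → ℝ} {d K : ℝ} (hφ : HasDerivAt φ d 0)
    (h : ∀ t : ℝ, 0 < t → t ≤ 1 → t * K ≤ φ t - φ 0) : K ≤ d := by
  have := aux_deriv_le_of_slope (φ := fun t => -φ t) (d := -d) (K := -K) hφ.neg ?_
  · linarith
  · intro t h1 h2; have := h t h1 h2; simp; linarith


lemma aux_hasDerivAt_line (f : H → ℝ) (g v h : H) (hg : HasGradientAt f g v) :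
    HasDerivAt (fun t : ℝ => f (v + t • h)) (inner ℝ g h : ℝ) 0 := by
  have hline : HasDerivAt (fun t : ℝ => v + t • h) h 0 := by
    simpa using ((hasDerivAt_id (0:ℝ)).smul_const h).const_add v
  have hf : HasFDerivAt f (InnerProductSpace.toDual ℝ H g : H →L[ℝ] ℝ) (v + (0:ℝ) • h) := by
    simpa using hg.hasFDerivAt
  have := hf.comp_hasDerivAt 0 hline
  exact (by simpa [InnerProductSpace.toDual_apply_apply] using this :
    HasDerivAt (f ∘ fun t : ℝ => v + t • h) (inner ℝ g h) 0)


lemma aux_grad_isSubgradient {f : H → ℝ} (hconv : ConvexOn ℝ Set.univ f)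
    (hd : Differentiable ℝ f) (v : H) : IsSubgradientAt f (gradient f v) v := by
  intro z
  have hg : HasGradientAt f (gradient f v) v := (hd v).hasGradientAt
  have hder := aux_hasDerivAt_line f (gradient f v) v (z - v) hg
  have key : (inner ℝ (gradient f v) (z - v) : ℝ) ≤ f z - f v := by
    refine aux_deriv_le_of_slope hder ?_
    intro t ht0 ht1
    have hcomb := hconv.2 (x := v) (y := z) (Set.mem_univ v) (Set.mem_univ z) (by linarith : (0:ℝ) ≤ 1 - t) (le_of_lt ht0) (by ring)
    have hpt : v + t • (z - v) = (1 - t) • v + t • z := by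
      rw [smul_sub, sub_smul, one_smul]; abel
    rw [hpt]
    simp only [zero_smul, add_zero]
    simp only [smul_eq_mul] at hcomb
    nlinarith [hcomb]
  linarith


lemma aux_subgrad_eq_grad {f : H → ℝ} (hd : Differentiable ℝ f) {u v : H}
    (hu : IsSubgradientAt f u v) : u = gradient f v := by
  have key : ∀ h : H, (inner ℝ u h : ℝ) ≤ inner ℝ (gradient f v) h := by
    intro h
    refine aux_slope_le_of_deriv (aux_hasDerivAt_line f (gradient f v) v h (hd v).hasGradientAt) ?_
    intro t ht0 ht1
    have := hu (v + t • h)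
    simp only [add_sub_cancel_left, zero_smul, add_zero] at this ⊢
    rw [real_inner_smul_right] at this
    linarith
  have h1 := key (u - gradient f v)
  have h2 : (inner ℝ (u - gradient f v) (u - gradient f v) : ℝ) ≤ 0 := by
    rw [inner_sub_left] at *; linarith
  have h3 : u - gradient f v = 0 := by
    have := real_inner_self_nonpos.mp h2
    exact this
  rw [sub_eq_zero] at h3; exact h3


lemma aux_subgrad_mono {f : H → ℝ} {u1 u2 y1 y2 : H}
    (h1 : IsSubgradientAt f u1 y1) (h2 : IsSubgradientAt f u2 y2) :
    0 ≤ (inner ℝ (u1 - u2) (y1 - y2) : ℝ) := by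
  have a := h1 y2
  have b := h2 y1
  have e1 : (inner ℝ u1 (y2 - y1) : ℝ) = - inner ℝ u1 (y1 - y2) := by
    rw [← inner_neg_right]; congr 1; abel
  rw [inner_sub_left]
  rw [e1] at a
  linarith


lemma aux_exists_affine_minorant {f : H → ℝ} (hconv : ConvexOn ℝ Set.univ f)
    (hlsc : LowerSemicontinuous f) (v : H) :
    ∃ (φ : H →L[ℝ] ℝ) (a : ℝ), ∀ z, a + φ z ≤ f z := by
  set S : Set (H × ℝ) := {p | f p.1 ≤ p.2} with hS
  have hSc : IsClosed S := by
    rw [← isOpen_compl_iff, isOpen_iff_mem_nhds]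
    rintro ⟨a, b⟩ hp
    simp only [hS, Set.mem_compl_iff, Set.mem_setOf_eq, not_le] at hp
    obtain ⟨c, hc1, hc2⟩ := exists_between hp
    have h1 : ∀ᶠ x' in nhds a, c < f x' := hlsc a c hc2
    have e1 : ∀ᶠ q : H × ℝ in nhds (a, b), c < f q.1 := by
      rw [nhds_prod_eq]; exact h1.prod_inl _
    have e2 : ∀ᶠ q : H × ℝ in nhds (a, b), q.2 < c := by
      rw [nhds_prod_eq]; exact Filter.Eventually.prod_inr (p := fun t => t < c) (Iio_mem_nhds hc1) _
    exact (e1.and e2).mono fun q hq => by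
      simp only [hS, Set.mem_compl_iff, Set.mem_setOf_eq, not_le]; linarith [hq.1, hq.2]
  have hSconv : Convex ℝ S := by
    have := hconv.convex_epigraph
    simpa [hS] using this
  have hx : ((v, f v - 1) : H × ℝ) ∉ S := by
    simp only [hS, Set.mem_setOf_eq]; push_neg; linarith
  obtain ⟨l, u, hl, hu⟩ := geometric_hahn_banach_closed_point hSconv hSc hx
  set c : ℝ := l (0, 1) with hc
  have hdecomp : ∀ (z : H) (t : ℝ), l (z, t) = l (z, 0) + t * c := by
    intro z t
    have hzt : ((z, t) : H × ℝ) = (z, (0:ℝ)) + t • ((0:H), (1:ℝ)) := by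
      simp [Prod.ext_iff]
    rw [hzt, map_add, _root_.map_smul, smul_eq_mul, hc]
  have hcneg : c < 0 := by
    by_contra hc0
    push_neg at hc0
    have h1 : l (v, f v) < u := hl _ (by simp [hS])
    have h2 : u < l (v, f v - 1) := hu
    rw [hdecomp] at h1 h2
    nlinarith
  refine ⟨(-c)⁻¹ • (l.comp (ContinuousLinearMap.inl ℝ H ℝ)), u / c, fun z => ?_⟩
  have h1 : l (z, f z) < u := hl _ (by simp [hS])
  rw [hdecomp] at h1
  have hcpos : 0 < -c := by linarith
  simp only [ContinuousLinearMap.smul_apply, ContinuousLinearMap.comp_apply,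
    ContinuousLinearMap.inl_apply, smul_eq_mul]
  have key : l (z, 0) - u ≤ (-c) * f z := by nlinarith
  have h4 : (-c)⁻¹ * (l (z, 0) - u) ≤ f z := by
    rw [inv_mul_le_iff₀ hcpos]; linarith
  have h5 : u / c + (-c)⁻¹ * l (z, 0) = (-c)⁻¹ * (l (z, 0) - u) := by
    rw [inv_neg, div_eq_mul_inv]; ring
  linarith


lemma aux_exists_min {g : H → ℝ} {κ : ℝ} (hb : BddBelow (Set.range g)) (hκ : 0 < κ)
    (hmid : ∀ a b : H, g ((1/2 : ℝ) • (a + b)) ≤ (g a + g b) / 2 - κ * ‖a - b‖ ^ 2)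
    (hlsc : LowerSemicontinuous g) : ∃ y, ∀ z, g y ≤ g z := by
  set S : ℝ := sInf (Set.range g) with hSdef
  have hSle : ∀ z, S ≤ g z := fun z => csInf_le hb ⟨z, rfl⟩
  have hne : (Set.range g).Nonempty := ⟨g 0, 0, rfl⟩
  have hseq : ∀ k : ℕ, ∃ z : H, g z < S + 1 / (k + 1) := by
    intro k
    have : S < S + 1 / (k + 1) := by
      have : (0:ℝ) < 1 / (k + 1) := by positivity
      linarith
    obtain ⟨w, hw, hw2⟩ := exists_lt_of_csInf_lt hne this
    obtain ⟨z, rfl⟩ := hw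
    exact ⟨z, hw2⟩
  choose zs hzs using hseq
  have hdist : ∀ j k : ℕ, ‖zs j - zs k‖ ^ 2 ≤ (1 / (2 * κ)) * (1 / (j + 1) + 1 / (k + 1)) := by
    intro j k
    have h1 := hmid (zs j) (zs k)
    have h2 := hSle ((1/2 : ℝ) • (zs j + zs k))
    have h3 := hzs j
    have h4 := hzs k
    have h5 : κ * ‖zs j - zs k‖ ^ 2 ≤ 1 / 2 * (1 / (j + 1) + 1 / (k + 1)) := by linarith
    rw [div_mul_eq_mul_div, le_div_iff₀ (by linarith : (0:ℝ) < 2 * κ)]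
    nlinarith
  have hcauchy : CauchySeq zs := by
    rw [Metric.cauchySeq_iff']
    intro ε hε
    obtain ⟨N, hN⟩ := exists_nat_gt (1 / (κ * ε ^ 2))
    refine ⟨N, fun j hj => ?_⟩
    rw [dist_eq_norm]
    have hj1 : (1:ℝ) / (j + 1) ≤ 1 / (N + 1) := by
      apply one_div_le_one_div_of_le (by positivity)
      have hcast : (N : ℝ) ≤ j := Nat.cast_le.2 hj
      linarith
    have hb1 := hdist j N
    have hbound : ‖zs j - zs N‖ ^ 2 < ε ^ 2 := by
      have hN1 : (1:ℝ) / (N + 1) < κ * ε ^ 2 := by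
        rw [div_lt_iff₀ (by positivity)]
        rw [div_lt_iff₀ (by positivity : (0:ℝ) < κ * ε ^ 2)] at hN
        nlinarith
      calc ‖zs j - zs N‖ ^ 2 ≤ (1 / (2 * κ)) * (1 / (j + 1) + 1 / (N + 1)) := hb1
      _ ≤ (1 / (2 * κ)) * (2 * (1 / (N + 1))) := by
          apply mul_le_mul_of_nonneg_left _ (by positivity)
          linarith
      _ < (1 / (2 * κ)) * (2 * (κ * ε ^ 2)) := by
          apply mul_lt_mul_of_pos_left _ (by positivity)
          linarith
      _ = ε ^ 2 := by field_simp
    exact lt_of_pow_lt_pow_left₀ 2 (le_of_lt hε) hbound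
  obtain ⟨y, hy⟩ := cauchySeq_tendsto_of_complete hcauchy
  refine ⟨y, fun z => ?_⟩
  refine le_trans ?_ (hSle z)
  by_contra hlt
  push_neg at hlt
  obtain ⟨c, hc1, hc2⟩ := exists_between hlt
  have h1 : ∀ᶠ k in Filter.atTop, c < g (zs k) := hy.eventually (hlsc y c hc2)
  obtain ⟨K, hK⟩ := exists_nat_gt (1 / (c - S))
  obtain ⟨k, hck, hkK⟩ := (h1.and (Filter.eventually_ge_atTop K)).exists
  have hk1 : (1:ℝ) / (k + 1) < c - S := by
    have hcast : (K : ℝ) ≤ k := Nat.cast_le.2 hkK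
    rw [div_lt_iff₀ (by positivity)]
    rw [div_lt_iff₀ (by linarith : (0:ℝ) < c - S)] at hK
    nlinarith
  have := hzs k
  linarith


lemma aux_prox_exists {f : H → ℝ} (hconv : ConvexOn ℝ Set.univ f)
    (hlsc : LowerSemicontinuous f) {l : ℝ} (hl : 0 < l) (v : H) :
    ∃ y : H, IsSubgradientAt f ((1/l) • (v - y)) y := by
  set g : H → ℝ := fun z => f z + ‖z - v‖ ^ 2 / (2 * l) with hg
  obtain ⟨φ, a, hφ⟩ := aux_exists_affine_minorant hconv hlsc v
  have hb : BddBelow (Set.range g) := by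
    refine ⟨a - ‖φ‖ * ‖v‖ - l * ‖φ‖ ^ 2 / 2, ?_⟩
    rintro w ⟨z, rfl⟩
    have h1 : a + φ z ≤ f z := hφ z
    have h2 : -(‖φ‖ * ‖z‖) ≤ φ z := by
      have hb2 := φ.le_opNorm z
      rw [Real.norm_eq_abs] at hb2
      have := neg_abs_le (φ z)
      linarith
    have h3 : ‖z‖ ≤ ‖z - v‖ + ‖v‖ := by
      calc ‖z‖ = ‖z - v + v‖ := by rw [sub_add_cancel]
      _ ≤ ‖z - v‖ + ‖v‖ := norm_add_le _ _
    have h4 : ‖φ‖ * ‖z - v‖ - l * ‖φ‖ ^ 2 / 2 ≤ ‖z - v‖ ^ 2 / (2 * l) := by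
      rw [le_div_iff₀ (by positivity : (0:ℝ) < 2 * l)]
      nlinarith [sq_nonneg (‖z - v‖ - l * ‖φ‖)]
    have h5 : -(‖φ‖ * ‖z‖) ≥ -(‖φ‖ * (‖z - v‖ + ‖v‖)) := by
      have := mul_le_mul_of_nonneg_left h3 (norm_nonneg φ)
      linarith
    simp only [hg]
    nlinarith [h1, h2, h4, h5]
  have hquad : ∀ a' b' : H, ‖(1/2:ℝ) • (a' + b') - v‖ ^ 2
      = (2 * ‖a' - v‖ ^ 2 + 2 * ‖b' - v‖ ^ 2 - ‖a' - b'‖ ^ 2) / 4 := by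
    intro a' b'
    have hxy : (1/2:ℝ) • (a' + b') - v = (1/2:ℝ) • ((a' - v) + (b' - v)) := by
      module
    have hpar := parallelogram_law_with_norm ℝ (a' - v) (b' - v)
    have hsub : (a' - v) - (b' - v) = a' - b' := by abel
    rw [hsub] at hpar
    have hexp : ‖(a' - v) + (b' - v)‖ ^ 2
        = 2 * ‖a' - v‖ ^ 2 + 2 * ‖b' - v‖ ^ 2 - ‖a' - b'‖ ^ 2 := by
      simp only [pow_two]; linarith [hpar]
    rw [hxy, norm_smul, Real.norm_eq_abs, mul_pow, abs_of_nonneg (by norm_num : (0:ℝ) ≤ 1/2),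
      hexp]
    ring
  have hmid : ∀ a' b' : H, g ((1/2 : ℝ) • (a' + b')) ≤ (g a' + g b') / 2
      - (1 / (8 * l)) * ‖a' - b'‖ ^ 2 := by
    intro a' b'
    have hconv2 := hconv.2 (Set.mem_univ a') (Set.mem_univ b')
      (by norm_num : (0:ℝ) ≤ 1/2) (by norm_num : (0:ℝ) ≤ 1/2) (by norm_num)
    rw [← smul_add] at hconv2
    simp only [smul_eq_mul] at hconv2
    have hq := hquad a' b'
    simp only [hg]
    rw [hq]
    have h8 : (2 * ‖a' - v‖ ^ 2 + 2 * ‖b' - v‖ ^ 2 - ‖a' - b'‖ ^ 2) / 4 / (2 * l)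
        = (‖a' - v‖ ^ 2 / (2 * l) + ‖b' - v‖ ^ 2 / (2 * l)) / 2
          - (1 / (8 * l)) * ‖a' - b'‖ ^ 2 := by
      field_simp; ring
    rw [h8]
    linarith [hconv2]
  have hlscg : LowerSemicontinuous g := by
    have hcont : Continuous fun z : H => ‖z - v‖ ^ 2 / (2 * l) := by fun_prop
    exact hlsc.add hcont.lowerSemicontinuous
  obtain ⟨y, hy⟩ := aux_exists_min hb (by positivity : (0:ℝ) < 1 / (8 * l)) hmid hlscg
  refine ⟨y, fun z => ?_⟩
  rw [real_inner_smul_left]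
  set Q : ℝ := ‖z - y‖ ^ 2 with hQ
  have key : ∀ t : ℝ, 0 < t → t ≤ 1 →
      f y + 1 / l * (inner ℝ (v - y) (z - y) : ℝ) ≤ f z + t * Q / (2 * l) := by
    intro t ht0 ht1
    have hgy := hy (y + t • (z - y))
    have hfconv : f (y + t • (z - y)) ≤ f y + t * (f z - f y) := by
      have hpt : y + t • (z - y) = (1 - t) • y + t • z := by
        rw [smul_sub, sub_smul, one_smul]; abel
      have hcomb := hconv.2 (Set.mem_univ y) (Set.mem_univ z)
        (by linarith : (0:ℝ) ≤ 1 - t) (le_of_lt ht0) (by ring)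
      rw [hpt]
      simp only [smul_eq_mul] at hcomb
      linarith
    have hnorm : ‖y + t • (z - y) - v‖ ^ 2
        = ‖y - v‖ ^ 2 + 2 * t * (inner ℝ (y - v) (z - y) : ℝ) + t ^ 2 * Q := by
      have hpt2 : y + t • (z - y) - v = (y - v) + t • (z - y) := by abel
      rw [hpt2, norm_add_sq_real, real_inner_smul_right, norm_smul, Real.norm_eq_abs,
        mul_pow, sq_abs, hQ]
      ring
    simp only [hg] at hgy
    rw [hnorm] at hgy
    have hiv : (inner ℝ (v - y) (z - y) : ℝ) = -(inner ℝ (y - v) (z - y) : ℝ) := by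
      rw [← inner_neg_left]; congr 1; abel
    rw [hiv]
    have hexpand : f y + ‖y - v‖ ^ 2 / (2 * l)
        ≤ f y + t * (f z - f y)
          + (‖y - v‖ ^ 2 + 2 * t * (inner ℝ (y - v) (z - y) : ℝ) + t ^ 2 * Q) / (2 * l) :=
      le_trans hgy (by linarith [hfconv])
    have hstep : 0 ≤ t * (f z - f y) + (2 * t * (inner ℝ (y - v) (z - y) : ℝ) + t ^ 2 * Q) / (2 * l) := by
      have hsplit : (‖y - v‖ ^ 2 + 2 * t * (inner ℝ (y - v) (z - y) : ℝ) + t ^ 2 * Q) / (2 * l)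
          = ‖y - v‖ ^ 2 / (2 * l) + (2 * t * (inner ℝ (y - v) (z - y) : ℝ) + t ^ 2 * Q) / (2 * l) := by
        ring
      rw [hsplit] at hexpand
      linarith
    -- divide by t
    have hdiv : 0 ≤ (f z - f y) + (2 * (inner ℝ (y - v) (z - y) : ℝ) + t * Q) / (2 * l) := by
      have h2l : (0:ℝ) < 2 * l := by positivity
      have : t * ((f z - f y) + (2 * (inner ℝ (y - v) (z - y) : ℝ) + t * Q) / (2 * l))
          = t * (f z - f y) + (2 * t * (inner ℝ (y - v) (z - y) : ℝ) + t ^ 2 * Q) / (2 * l) := by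
        field_simp
      nlinarith [hstep, this, ht0]
    have h2l : (0:ℝ) < 2 * l := by positivity
    have hrw : (2 * (inner ℝ (y - v) (z - y) : ℝ) + t * Q) / (2 * l)
        = (inner ℝ (y - v) (z - y) : ℝ) / l + t * Q / (2 * l) := by
      field_simp
    rw [hrw] at hdiv
    have : 1 / l * -(inner ℝ (y - v) (z - y) : ℝ) = -((inner ℝ (y - v) (z - y) : ℝ) / l) := by
      field_simp
    rw [this]
    linarith
  refine le_of_forall_pos_le_add ?_
  intro ε hε
  set t : ℝ := min 1 (ε * (2 * l) / (Q + 1)) with ht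
  have hQ0 : 0 ≤ Q := by positivity
  have ht0 : 0 < t := lt_min one_pos (by positivity)
  have ht1 : t ≤ 1 := min_le_left _ _
  have hk := key t ht0 ht1
  have htQ : t * Q / (2 * l) ≤ ε := by
    rw [div_le_iff₀ (by positivity : (0:ℝ) < 2 * l)]
    have hA : t ≤ ε * (2 * l) / (Q + 1) := min_le_right _ _
    have h1 : t * Q ≤ (ε * (2 * l) / (Q + 1)) * Q :=
      mul_le_mul_of_nonneg_right hA hQ0
    have h2 : (ε * (2 * l) / (Q + 1)) * Q = (ε * (2 * l)) * (Q / (Q + 1)) := by ring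
    have h3 : Q / (Q + 1) ≤ 1 := by rw [div_le_one (by positivity)]; linarith
    have h4 : (ε * (2 * l)) * (Q / (Q + 1)) ≤ ε * (2 * l) :=
      mul_le_of_le_one_right (by positivity) h3
    linarith
  linarith


lemma aux_single {f : H → ℝ} (hconv : ConvexOn ℝ Set.univ f)
    (hlsc : LowerSemicontinuous f) {d : ℝ} (hd : d ≤ 0)
    (hcase : Differentiable ℝ f ∨ d < 0) (v : H) :
    ∃! p : H × H, p.2 = v + d • p.1 ∧ IsSubgradientAt f p.1 p.2 := by
  rcases lt_or_eq_of_le hd with hdneg | hd0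
  · -- d < 0
    set l : ℝ := -d with hldef
    have hl : 0 < l := by simp [hldef]; linarith
    obtain ⟨y, hy⟩ := aux_prox_exists hconv hlsc hl v
    refine ⟨((1/l) • (v - y), y), ⟨?_, hy⟩, ?_⟩
    · show y = v + d • (1/l) • (v - y)
      rw [smul_smul]
      have : d * (1/l) = -1 := by field_simp [hldef]; linarith
      rw [this, neg_one_smul]
      abel
    · rintro ⟨u', y'⟩ ⟨heq', hsub'⟩
      simp only at heq' hsub'
      have hmono := aux_subgrad_mono hsub' hy
      have hyy : y' - y = d • (u' - (1/l) • (v - y)) := by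
        have hdl : d * (1/l) = -1 := by field_simp [hldef]; linarith
        rw [heq', smul_sub, smul_smul, hdl, neg_one_smul]
        abel
      rw [hyy, real_inner_smul_right, real_inner_self_eq_norm_sq] at hmono
      have hz : ‖u' - (1/l) • (v - y)‖ ^ 2 ≤ 0 := by nlinarith
      have hz2 : u' - (1/l) • (v - y) = 0 := by
        have := sq_nonneg ‖u' - (1/l) • (v - y)‖
        have hn : ‖u' - (1/l) • (v - y)‖ = 0 := by nlinarith [norm_nonneg (u' - (1/l) • (v - y))]
        exact norm_eq_zero.1 hn
      have hu : u' = (1/l) • (v - y) := by rwa [sub_eq_zero] at hz2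
      have hyeq : y' = y := by
        rw [heq', hu]
        rw [smul_smul]
        have : d * (1/l) = -1 := by field_simp [hldef]; linarith
        rw [this, neg_one_smul]; abel
      simp [Prod.ext_iff, hu, hyeq]
  · -- d = 0
    rcases hcase with hdiff | hneg
    · refine ⟨(gradient f v, v), ⟨?_, ?_⟩, ?_⟩
      · show v = v + d • gradient f v
        rw [hd0, zero_smul, add_zero]
      · exact aux_grad_isSubgradient hconv hdiff v
      · rintro ⟨u', y'⟩ ⟨heq', hsub'⟩
        simp only at heq' hsub'
        have hy' : y' = v := by rw [heq', hd0, zero_smul, add_zero]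
        rw [hy'] at hsub'
        have := aux_subgrad_eq_grad hdiff hsub'
        simp [Prod.ext_iff, this, hy']
    · exact absurd (hd0 ▸ hneg) (lt_irrefl 0)


lemma aux_split_sum {m : ℕ} (D : Matrix (Fin m) (Fin m) ℝ)
    (hD : ∀ i j : Fin m, (i : ℕ) < (j : ℕ) → D i j = 0) (w : Fin m → H) (i : Fin m) :
    matVecH D w i = (∑ j : Fin m, if (j : ℕ) < (i : ℕ) then D i j • w j else 0) + D i i • w i := by
  have hterm : ∀ j : Fin m, D i j • w j
      = (if (j : ℕ) < (i : ℕ) then D i j • w j else 0)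
        + (if j = i then D i i • w i else 0) := by
    intro j
    rcases lt_trichotomy (j : ℕ) (i : ℕ) with h | h | h
    · rw [if_pos h, if_neg (fun he => by simp [he] at h), add_zero]
    · have : j = i := Fin.ext h
      subst this
      rw [if_neg (lt_irrefl _), if_pos rfl, zero_add]
    · have hne : j ≠ i := fun he => by subst he; exact lt_irrefl _ h
      rw [hD i j h, if_neg (by omega : ¬ (j : ℕ) < (i : ℕ)), if_neg hne, zero_smul, add_zero]
  calc matVecH D w i
      = ∑ j : Fin m, ((if (j : ℕ) < (i : ℕ) then D i j • w j else 0)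
        + (if j = i then D i i • w i else 0)) := Finset.sum_congr rfl (fun j _ => hterm j)
    _ = (∑ j : Fin m, if (j : ℕ) < (i : ℕ) then D i j • w j else 0)
        + ∑ j : Fin m, (if j = i then D i i • w i else 0) := Finset.sum_add_distrib
    _ = (∑ j : Fin m, if (j : ℕ) < (i : ℕ) then D i j • w j else 0) + D i i • w i := by
        rw [Finset.sum_ite_eq' Finset.univ i (fun _ => D i i • w i)]
        simp


lemma aux_system {n m : ℕ} (C : Matrix (Fin m) (Fin n) ℝ) (D : Matrix (Fin m) (Fin m) ℝ)
    (f : Fin m → H → ℝ)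
    (hD : ∀ i j : Fin m, (i : ℕ) < (j : ℕ) → D i j = 0)
    (hsingle : ∀ (i : Fin m) (v : H),
      ∃! p : H × H, p.2 = v + D i i • p.1 ∧ IsSubgradientAt (f i) p.1 p.2)
    (x : Fin n → H) :
    ∃! uy : (Fin m → H) × (Fin m → H),
      uy.2 = matVecH C x + matVecH D uy.1 ∧
        ∀ i, IsSubgradientAt (f i) (uy.1 i) (uy.2 i) := by
  classical
  -- the "partial input" function
  set V : (Fin m → H × H) → Fin m → H :=
    fun w i => matVecH C x i + ∑ j : Fin m, if (j : ℕ) < (i : ℕ) then D i j • (w j).1 else 0 with hV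
  have hVcongr : ∀ (w w' : Fin m → H × H) (i : Fin m),
      (∀ j : Fin m, (j : ℕ) < (i : ℕ) → (w j).1 = (w' j).1) → V w i = V w' i := by
    intro w w' i hagree
    simp only [hV]
    congr 1
    apply Finset.sum_congr rfl
    intro j _
    by_cases hj : (j : ℕ) < (i : ℕ)
    · rw [if_pos hj, if_pos hj, hagree j hj]
    · rw [if_neg hj, if_neg hj]
  -- choice of single solutions
  have hs : ∀ (i : Fin m) (v : H), ∃ p : H × H,
      (p.2 = v + D i i • p.1 ∧ IsSubgradientAt (f i) p.1 p.2) ∧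
      ∀ q : H × H, (q.2 = v + D i i • q.1 ∧ IsSubgradientAt (f i) q.1 q.2) → q = p :=
    fun i v => hsingle i v
  choose sol hspec huniq using hs
  set SOL : Fin m → (Fin m → H × H) → H × H := fun i w => sol i (V w i) with hSOL
  set P : ℕ → Fin m → H × H := auxBuildP SOL with hP
  have hstep : ∀ (k : ℕ) (i : Fin m), P (k + 1) i
      = if (i : ℕ) = k then SOL i (P k) else P k i := by
    intro k i; simp only [hP, auxBuildP]
  have hagree' : ∀ (k : ℕ) (i : Fin m), (i : ℕ) ≠ k → P (k + 1) i = P k i := by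
    intro k i h; rw [hstep, if_neg h]
  have hinv : ∀ k : ℕ, ∀ i : Fin m, (i : ℕ) < k →
      (P k i).2 = V (P k) i + D i i • (P k i).1 ∧
        IsSubgradientAt (f i) (P k i).1 (P k i).2 := by
    intro k
    induction k with
    | zero => intro i h; omega
    | succ k ih =>
      intro i hik
      have hVsame : V (P (k + 1)) i = V (P k) i := by
        refine hVcongr _ _ i (fun j hj => ?_)
        rw [hagree' k j (by omega)]
      by_cases hik2 : (i : ℕ) = k
      · have hPi : P (k + 1) i = sol i (V (P k) i) := by rw [hstep, if_pos hik2]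
        rw [hPi, hVsame]
        exact hspec i (V (P k) i)
      · have hPi : P (k + 1) i = P k i := hagree' k i hik2
        have hsame2 : V (P (k + 1)) i = V (P k) i := hVsame
        rw [hPi, hsame2]
        exact ih i (by omega)
  set u : Fin m → H := fun i => (P m i).1 with hu
  set y : Fin m → H := fun i => (P m i).2 with hy
  have hall : ∀ i : Fin m, y i = V (P m) i + D i i • u i ∧
      IsSubgradientAt (f i) (u i) (y i) := fun i => hinv m i i.isLt
  have hVu : ∀ i : Fin m, V (P m) i
      = matVecH C x i + ∑ j : Fin m, (if (j : ℕ) < (i : ℕ) then D i j • u j else 0) := by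
    intro i; rfl
  have hsys : y = matVecH C x + matVecH D u := by
    funext i
    rw [Pi.add_apply, aux_split_sum D hD u i, (hall i).1, hVu i]
    abel
  refine ⟨(u, y), ⟨hsys, fun i => (hall i).2⟩, ?_⟩
  rintro ⟨u', y'⟩ ⟨heq', hsub'⟩
  simp only at heq' hsub'
  have main : ∀ N : ℕ, ∀ i : Fin m, (i : ℕ) = N → u' i = u i ∧ y' i = y i := by
    intro N
    induction N using Nat.strong_induction_on with
    | _ N ihN =>
      intro i hiN
      have hvagree : (∑ j : Fin m, if (j : ℕ) < (i : ℕ) then D i j • u' j else 0)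
          = ∑ j : Fin m, if (j : ℕ) < (i : ℕ) then D i j • u j else 0 := by
        refine Finset.sum_congr rfl fun j _ => ?_
        by_cases hj : (j : ℕ) < (i : ℕ)
        · rw [if_pos hj, if_pos hj, (ihN (j : ℕ) (by omega) j rfl).1]
        · rw [if_neg hj, if_neg hj]
      set v : H := matVecH C x i + ∑ j : Fin m, (if (j : ℕ) < (i : ℕ) then D i j • u j else 0)
        with hv
      have hy1 : y i = v + D i i • u i := by
        have := congrFun hsys i
        rw [Pi.add_apply, aux_split_sum D hD u i] at this
        rw [this, hv]; abel
      have hy2 : y' i = v + D i i • u' i := by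
        have := congrFun heq' i
        rw [Pi.add_apply, aux_split_sum D hD u' i] at this
        rw [this, hv, ← hvagree]; abel
      have e1 : ((u i, y i) : H × H) = sol i v := huniq i v _ ⟨hy1, (hall i).2⟩
      have e2 : ((u' i, y' i) : H × H) = sol i v := huniq i v _ ⟨hy2, hsub' i⟩
      have := e2.trans e1.symm
      exact ⟨congrArg Prod.fst this, congrArg Prod.snd this⟩
  have hu' : u' = u := funext fun i => (main (i : ℕ) i rfl).1
  have hy' : y' = y := funext fun i => (main (i : ℕ) i rfl).2
  simp [hu', hy']


lemma aux_part1 {n m : ℕ} (C : Matrix (Fin m) (Fin n) ℝ) (D : Matrix (Fin m) (Fin m) ℝ)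
    (σ : Fin m → ℝ) (β : Fin m → ℝ≥0∞)
    (hσβ : ∀ i, 0 ≤ σ i ∧ ENNReal.ofReal (σ i) < β i)
    (h2 : Assumption2 β D)
    (f : Fin m → H → ℝ) (hf : ∀ i, MemFClass (σ i) (β i) (f i)) :
    ∀ x : Fin n → H, ∃! uy : (Fin m → H) × (Fin m → H),
        uy.2 = matVecH C x + matVecH D uy.1 ∧
          ∀ i, IsSubgradientAt (f i) (uy.1 i) (uy.2 i) := by
  intro x
  have hconv : ∀ i, ConvexOn ℝ Set.univ (f i) :=
    fun i => aux_convexOn_of_strong (hσβ i).1 (hf i).1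
  have hlsc : ∀ i, LowerSemicontinuous (f i) := by
    intro i
    by_cases hβ : β i = ⊤
    · exact (hf i).2.2 hβ
    · exact (((hf i).2.1 hβ).1.continuous).lowerSemicontinuous
  have hcase : ∀ i, Differentiable ℝ (f i) ∨ D i i < 0 := by
    intro i
    rcases h2.2.2 i with hβ | hD
    · exact Or.inl ((hf i).2.1 hβ).1
    · exact Or.inr hD
  exact aux_system C D f h2.1
    (fun i v => aux_single (hconv i) (hlsc i) (h2.2.1 i) (hcase i) v) x

end WellPosedAux

/-- Well-posedness: under Assumption 2 the update equations have a unique solution,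
and the algorithm produces a unique infinite sequence from any initial point. -/
theorem assumption2_well_posedness
    {H : Type*} [NormedAddCommGroup H] [InnerProductSpace ℝ H] [CompleteSpace H]
    {n m : ℕ} (hn : 1 ≤ n) (hm : 1 ≤ m)
    (A : Matrix (Fin n) (Fin n) ℝ) (B : Matrix (Fin n) (Fin m) ℝ)
    (C : Matrix (Fin m) (Fin n) ℝ) (D : Matrix (Fin m) (Fin m) ℝ)
    (σ : Fin m → ℝ) (β : Fin m → ℝ≥0∞)
    (hσβ : ∀ i, 0 ≤ σ i ∧ ENNReal.ofReal (σ i) < β i)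
    (h2 : Assumption2 β D)
    (f : Fin m → H → ℝ) (hf : ∀ i, MemFClass (σ i) (β i) (f i)) :
    -- unique solvability of the implicit update equations
    (∀ x : Fin n → H, ∃! uy : (Fin m → H) × (Fin m → H),
        uy.2 = matVecH C x + matVecH D uy.1 ∧
          ∀ i, IsSubgradientAt (f i) (uy.1 i) (uy.2 i)) ∧
    -- unique infinite trajectory from any initial point
    (∀ x0 : Fin n → H,
        ∃! s : ℕ → (Fin n → H) × (Fin m → H) × (Fin m → H) × (Fin m → ℝ),
          (s 0).1 = x0 ∧ ∀ k : ℕ,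
            AlgConsistent C D f (s k).1 (s k).2.1 (s k).2.2.1 (s k).2.2.2 ∧
            (s (k + 1)).1 = matVecH A (s k).1 + matVecH B (s k).2.1) := by
  
  have part1 := aux_part1 C D σ β hσβ h2 f hf
  refine ⟨part1, ?_⟩
  intro x0
  have hex : ∀ x : Fin n → H, ∃ uy : (Fin m → H) × (Fin m → H),
      (uy.2 = matVecH C x + matVecH D uy.1 ∧
        ∀ i, IsSubgradientAt (f i) (uy.1 i) (uy.2 i)) ∧
      ∀ q : (Fin m → H) × (Fin m → H),
        (q.2 = matVecH C x + matVecH D q.1 ∧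
          ∀ i, IsSubgradientAt (f i) (q.1 i) (q.2 i)) → q = uy := fun x => part1 x
  choose W hW hWu using hex
  set step : (Fin n → H) → (Fin n → H) × (Fin m → H) × (Fin m → H) × (Fin m → ℝ) :=
    fun x => (x, (W x).1, (W x).2, fun i => f i ((W x).2 i)) with hstepdef
  set next : ((Fin n → H) × (Fin m → H) × (Fin m → H) × (Fin m → ℝ)) →
      ((Fin n → H) × (Fin m → H) × (Fin m → H) × (Fin m → ℝ)) :=
    fun st => step (matVecH A st.1 + matVecH B st.2.1) with hnextdef
  set s : ℕ → (Fin n → H) × (Fin m → H) × (Fin m → H) × (Fin m → ℝ) :=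
    fun k => next^[k] (step x0) with hsdef
  have hs0 : s 0 = step x0 := rfl
  have hssucc : ∀ k, s (k + 1) = next (s k) := by
    intro k
    simp only [hsdef, Function.iterate_succ_apply']
  have hconsstep : ∀ x : Fin n → H,
      AlgConsistent C D f (step x).1 (step x).2.1 (step x).2.2.1 (step x).2.2.2 := by
    intro x
    refine ⟨(hW x).1, (hW x).2, fun i => rfl⟩
  have hform : ∀ k, ∃ xk, s k = step xk := by
    intro k
    induction k with
    | zero => exact ⟨x0, rfl⟩
    | succ k ih =>
      exact ⟨matVecH A (s k).1 + matVecH B (s k).2.1, by rw [hssucc k]⟩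
  refine ⟨s, ⟨rfl, fun k => ⟨?_, ?_⟩⟩, ?_⟩
  · obtain ⟨xk, hxk⟩ := hform k
    rw [hxk]
    exact hconsstep xk
  · rw [hssucc k]
  · -- uniqueness
    intro t ht
    obtain ⟨ht0, htrec⟩ := ht
    have haux : ∀ k, (t k).1 = (s k).1 → t k = s k := by
      intro k hk1
      obtain ⟨hcons_t, _⟩ := htrec k
      have hcons_s : AlgConsistent C D f (s k).1 (s k).2.1 (s k).2.2.1 (s k).2.2.2 := by
        obtain ⟨xk, hxk⟩ := hform k
        rw [hxk]; exact hconsstep xk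
      have he1 : ((t k).2.1, (t k).2.2.1) = W ((t k).1) :=
        hWu ((t k).1) _ ⟨hcons_t.1, hcons_t.2.1⟩
      have he2 : ((s k).2.1, (s k).2.2.1) = W ((s k).1) :=
        hWu ((s k).1) _ ⟨hcons_s.1, hcons_s.2.1⟩
      rw [hk1] at he1
      have hpair : ((t k).2.1, (t k).2.2.1) = ((s k).2.1, (s k).2.2.1) := he1.trans he2.symm
      rw [Prod.mk.injEq] at hpair
      obtain ⟨hu, hy⟩ := hpair
      have hF : (t k).2.2.2 = (s k).2.2.2 := by
        funext i
        rw [hcons_t.2.2 i, hcons_s.2.2 i, hy]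
      have : t k = ((t k).1, (t k).2.1, (t k).2.2.1, (t k).2.2.2) := rfl
      rw [this, hk1, hu, hy, hF]
    have hmain : ∀ k, t k = s k := by
      intro k
      induction k with
      | zero => exact haux 0 (by rw [ht0, hs0])
      | succ k ih =>
        refine haux (k + 1) ?_
        rw [(htrec k).2, hssucc k, ih]
    exact funext hmain
end

section
/- Let H be a real Hilbert space, k and d positive integers with dim H ≥ k, let Q ∈ S^k be symmetric, q ∈ ℝ^d, and let (M_1, a_1), …, (M_r, a_r) be finitely many pairs with M_j ∈ S^k symmetric and a_j ∈ ℝ^d. Then the supremum of ⟨ζ, (Q⊗Id)ζ⟩ + qᵀχ over all ζ ∈ H^k and χ ∈ ℝ^d satisfying a_jᵀχ + ⟨ζ, (M_j⊗Id)ζ⟩ ≤ 0 for all j = 1,…,r, equals the supremum of trace(QG) + qᵀχ over all positive semidefinite G ∈ S^k and χ ∈ ℝ^d satisfying a_jᵀχ + trace(M_j G) ≤ 0 for all j = 1,…,r (both suprema taken in ℝ ∪ {±∞}). -/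
/-- Quadratic form `⟨z, (M ⊗ Id) z⟩ = Σᵢⱼ Mᵢⱼ ⟨zᵢ, zⱼ⟩` on `H^k`. -/
noncomputable def quadFormH {H : Type*} [NormedAddCommGroup H] [InnerProductSpace ℝ H]
    {ι : Type*} [Fintype ι] (M : Matrix ι ι ℝ) (z : ι → H) : ℝ :=
  ∑ i, ∑ j, M i j * (inner ℝ (z i) (z j) : ℝ)

/-- The Gram matrix of a family of vectors. -/
noncomputable def gramMat {H : Type*} [NormedAddCommGroup H] [InnerProductSpace ℝ H]
    {k : ℕ} (ζ : Fin k → H) : Matrix (Fin k) (Fin k) ℝ :=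
  Matrix.of fun i j => (inner ℝ (ζ i) (ζ j) : ℝ)

lemma gramMat_posSemidef {H : Type*} [NormedAddCommGroup H] [InnerProductSpace ℝ H]
    {k : ℕ} (ζ : Fin k → H) : (gramMat ζ).PosSemidef := by
  refine Matrix.PosSemidef.of_dotProduct_mulVec_nonneg ?_ ?_
  · ext i j
    simp [gramMat, Matrix.conjTranspose_apply, real_inner_comm]
  · intro x
    have h : dotProduct (star x) ((gramMat ζ).mulVec x)
        = (inner ℝ (∑ i, x i • ζ i) (∑ j, x j • ζ j) : ℝ) := by
      simp only [dotProduct, Matrix.mulVec, gramMat, Matrix.of_apply,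
        sum_inner, inner_sum, real_inner_smul_left, real_inner_smul_right,
        Pi.star_apply, star_trivial, Finset.mul_sum]
      refine Finset.sum_congr rfl fun i _ => Finset.sum_congr rfl fun j _ => ?_
      rw [real_inner_comm (ζ j) (ζ i)]
      ring
    rw [h]
    exact real_inner_self_nonneg

lemma trace_mul_gramMat {H : Type*} [NormedAddCommGroup H] [InnerProductSpace ℝ H]
    {k : ℕ} (M : Matrix (Fin k) (Fin k) ℝ) (ζ : Fin k → H) :
    Matrix.trace (M * gramMat ζ) = quadFormH M ζ := by
  unfold quadFormH
  simp only [Matrix.trace, Matrix.diag, Matrix.mul_apply, gramMat, Matrix.of_apply]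
  refine Finset.sum_congr rfl fun i _ => Finset.sum_congr rfl fun j _ => ?_
  rw [real_inner_comm]

/-- Any PSD matrix is the Gram matrix of some family, provided `dim H ≥ k`. -/
lemma exists_gram {H : Type*} [NormedAddCommGroup H] [InnerProductSpace ℝ H]
    {k : ℕ} (hk : 0 < k) (hdim : (k : Cardinal) ≤ Module.rank ℝ H)
    {G : Matrix (Fin k) (Fin k) ℝ} (hG : G.PosSemidef) :
    ∃ ζ : Fin k → H, gramMat ζ = G := by
  haveI : NeZero k := ⟨hk.ne'⟩
  obtain ⟨s, hsc, hsli⟩ := le_rank_iff_exists_linearIndependent_finset.mp hdim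
  have hcard : Fintype.card (↥(s : Set H)) = k := by
    simpa using hsc
  let e0 : Fin k ≃ ↥(s : Set H) := (Fintype.equivFinOfCardEq hcard).symm
  have hf : LinearIndependent ℝ (fun i : Fin k => ((e0 i : H))) :=
    hsli.comp e0 e0.injective
  have i1 : LocallyFiniteOrderBot (Fin k) := inferInstance
  have i2 : WellFoundedLT (Fin k) := inferInstance
  let e : Fin k → H := @InnerProductSpace.gramSchmidtNormed ℝ H _ _ _ (Fin k) _ i1 i2
    (fun i : Fin k => ((e0 i : H)))
  have horth : Orthonormal ℝ e :=
    @InnerProductSpace.gramSchmidtNormed_orthonormal ℝ H _ _ _ (Fin k) _ i1 i2 _ hf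
  obtain ⟨B, hB⟩ : ∃ B : Matrix (Fin k) (Fin k) ℝ, G = B.conjTranspose * B := by
    open scoped MatrixOrder in exact CStarAlgebra.nonneg_iff_eq_star_mul_self.mp (Matrix.nonneg_iff_posSemidef.mpr hG)
  refine ⟨fun i => ∑ l, B l i • e l, ?_⟩
  ext i j
  have := horth
  rw [orthonormal_iff_ite] at this
  simp only [gramMat, Matrix.of_apply, sum_inner, inner_sum, real_inner_smul_left,
    real_inner_smul_right, this, mul_ite, mul_one, mul_zero, Finset.sum_ite_eq',
    Finset.mem_univ, if_true]
  rw [hB]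
  simp only [Matrix.mul_apply, Matrix.conjTranspose_apply, star_trivial]
  exact Finset.sum_congr rfl fun l _ => mul_comm _ _

/-- Tightness of the Gram-matrix semidefinite relaxation of a quadratically
constrained quadratic performance estimation problem over a real Hilbert space
of dimension at least `k`: the two suprema (in `ℝ ∪ {±∞} = EReal`) coincide. -/
theorem gram_relaxation_tight
    {H : Type*} [NormedAddCommGroup H] [InnerProductSpace ℝ H]
    (k d r : ℕ) (hk : 0 < k) (hd : 0 < d)
    (hdim : (k : Cardinal) ≤ Module.rank ℝ H)
    (Q : Matrix (Fin k) (Fin k) ℝ) (hQsymm : Q.IsSymm)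
    (q : Fin d → ℝ)
    (M : Fin r → Matrix (Fin k) (Fin k) ℝ) (hMsymm : ∀ j, (M j).IsSymm)
    (a : Fin r → Fin d → ℝ) :
    sSup {v : EReal | ∃ (ζ : Fin k → H) (χ : Fin d → ℝ),
        (∀ j, dotProduct (a j) χ + quadFormH (M j) ζ ≤ 0) ∧
        v = ((quadFormH Q ζ + dotProduct q χ : ℝ) : EReal)} =
      sSup {v : EReal | ∃ (G : Matrix (Fin k) (Fin k) ℝ) (χ : Fin d → ℝ),
        G.PosSemidef ∧
        (∀ j, dotProduct (a j) χ + Matrix.trace (M j * G) ≤ 0) ∧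
        v = ((Matrix.trace (Q * G) + dotProduct q χ : ℝ) : EReal)} := by
  congr 1
  ext v
  constructor
  · rintro ⟨ζ, χ, hcon, rfl⟩
    refine ⟨gramMat ζ, χ, gramMat_posSemidef ζ, fun j => ?_, ?_⟩
    · rw [trace_mul_gramMat]; exact hcon j
    · rw [trace_mul_gramMat]
  · rintro ⟨G, χ, hG, hcon, rfl⟩
    obtain ⟨ζ, hζ⟩ := exists_gram hk hdim hG
    refine ⟨ζ, χ, fun j => ?_, ?_⟩
    · have h := hcon j
      rw [← hζ, trace_mul_gramMat] at h
      exact h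
    · rw [← trace_mul_gramMat Q ζ, hζ]
end
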